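/- arXiv:2112.14674 — 2 statements merged into one kernel-verified Lean document; each statement's English description precedes it below -/
import Mathlib

section
/- Let X = (X^1,...,X^p) be a random vector taking values in {0,1,...,m}^p, let V : {0,...,m} → ℝ^m be given by V(x) = (1_{{1}}(x),...,1_{{m}}(x)), and let [Σ_XX]_v ∈ ℝ^{mp×mp} be the block matrix whose (i,j)-th m×m block is cov[V(X^i), V(X^j)]. Assume [Σ_XX]_v is invertible. Then, for any i ≠ j, X^i and X^j are additively conditionally independent given X^{−{i,j}} if and only if the (i,j)-th m×m block of the inverse matrix [Σ_XX]_v^{-1} is the zero matrix. -/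
open MeasureTheory

noncomputable section

/-- Expectation of a real-valued random variable. -/
def expec {Ω : Type*} [MeasurableSpace Ω] (μ : Measure Ω) (f : Ω → ℝ) : ℝ := ∫ ω, f ω ∂μ

/-- Covariance of two real-valued random variables. -/
def covRV {Ω : Type*} [MeasurableSpace Ω] (μ : Measure Ω) (f g : Ω → ℝ) : ℝ :=
  expec μ (fun ω => f ω * g ω) - expec μ f * expec μ g

/-- The additive space `𝒜_{X^A}`: the linear span (inside the functions on `Ω`) of the
mean-zero functions of the single coordinates `X^k`, `k ∈ A`. -/
def addSpace {Ω ι α : Type*} [MeasurableSpace Ω] (μ : Measure Ω)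
    (X : Ω → ι → α) (A : Set ι) : Submodule ℝ (Ω → ℝ) :=
  Submodule.span ℝ {f | ∃ k ∈ A, ∃ φ : α → ℝ,
    expec μ (fun ω => φ (X ω k)) = 0 ∧ f = fun ω => φ (X ω k)}

/-- Additive conditional independence of `X^A` and `X^B` given `X^C`:
`(𝒜_A + 𝒜_C) ⊖ 𝒜_C` is orthogonal in `L²(P)` to `(𝒜_B + 𝒜_C) ⊖ 𝒜_C`. -/
def ACI {Ω ι α : Type*} [MeasurableSpace Ω] (μ : Measure Ω)
    (X : Ω → ι → α) (A B C : Set ι) : Prop :=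
  ∀ f ∈ addSpace μ X (A ∪ C),
    (∀ h ∈ addSpace μ X C, expec μ (fun ω => f ω * h ω) = 0) →
  ∀ g ∈ addSpace μ X (B ∪ C),
    (∀ h ∈ addSpace μ X C, expec μ (fun ω => g ω * h ω) = 0) →
      expec μ (fun ω => f ω * g ω) = 0

/-- Conditional independence of the coordinates `X^i` and `X^j` given the remaining
coordinates `X^{-{i,j}}`, expressed by the standard factorization of the joint law of
discrete variables. -/
def CIpair {Ω ι α : Type*} [MeasurableSpace Ω] (μ : Measure Ω)
    (X : Ω → ι → α) (i j : ι) : Prop :=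
  ∀ (a b : α) (z : ι → α),
    μ {ω | X ω i = a ∧ X ω j = b ∧ ∀ k, k ≠ i → k ≠ j → X ω k = z k} *
      μ {ω | ∀ k, k ≠ i → k ≠ j → X ω k = z k} =
    μ {ω | X ω i = a ∧ ∀ k, k ≠ i → k ≠ j → X ω k = z k} *
      μ {ω | X ω j = b ∧ ∀ k, k ≠ i → k ≠ j → X ω k = z k}

/-- The indicator vector `V(x) = (1_{{1}}(x), …, 1_{{m}}(x))` of a value in `{0,1,…,m}`. -/
def Vfun {m : ℕ} (x : Fin (m + 1)) : Fin m → ℝ :=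
  fun a => if (x : ℕ) = (a : ℕ) + 1 then 1 else 0

open RealInnerProductSpace in
lemma aci_abstract {E : Type*} [NormedAddCommGroup E] [InnerProductSpace ℝ E]
    [FiniteDimensional ℝ E] (F G : Submodule ℝ E) (hFG : F ⊓ G = ⊥) :
    (∀ f ∈ F ⊔ G, (∀ b ∈ G, ⟪f, b⟫ = 0) → ∀ g ∈ F ⊔ G, (∀ a ∈ F, ⟪g, a⟫ = 0) →
      ⟪f, g⟫ = 0) ↔ ∀ a ∈ F, ∀ b ∈ G, ⟪a, b⟫ = 0 := by
  constructor
  · intro H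
    have key : ∀ a ∈ F, ∀ b ∈ G,
        ⟪a, b⟫ = ⟪(Submodule.orthogonalProjection G a : E), (Submodule.orthogonalProjection F b : E)⟫ := by
      intro a ha b hb
      have hfo : a - (Submodule.orthogonalProjection G a : E) ∈ Gᗮ :=
        Submodule.sub_starProjection_mem_orthogonal a
      have hgo : b - (Submodule.orthogonalProjection F b : E) ∈ Fᗮ :=
        Submodule.sub_starProjection_mem_orthogonal b
      have hf1 : a - (Submodule.orthogonalProjection G a : E) ∈ F ⊔ G :=
        sub_mem (Submodule.mem_sup_left ha)
          (Submodule.mem_sup_right (Submodule.orthogonalProjection G a).2)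
      have hg1 : b - (Submodule.orthogonalProjection F b : E) ∈ F ⊔ G :=
        sub_mem (Submodule.mem_sup_right hb)
          (Submodule.mem_sup_left (Submodule.orthogonalProjection F b).2)
      have hf2 : ∀ c ∈ G, ⟪a - (Submodule.orthogonalProjection G a : E), c⟫ = 0 := by
        intro c hc; rw [real_inner_comm]; exact hfo c hc
      have hg2 : ∀ c ∈ F, ⟪b - (Submodule.orthogonalProjection F b : E), c⟫ = 0 := by
        intro c hc; rw [real_inner_comm]; exact hgo c hc
      have h0 : ⟪a - (Submodule.orthogonalProjection G a : E),
          b - (Submodule.orthogonalProjection F b : E)⟫ = 0 := H _ hf1 hf2 _ hg1 hg2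
      have E0 : ⟪a - (Submodule.orthogonalProjection G a : E), b - (Submodule.orthogonalProjection F b : E)⟫
          = ⟪a, b⟫ - ⟪a, (Submodule.orthogonalProjection F b : E)⟫
            - ⟪(Submodule.orthogonalProjection G a : E), b⟫
            + ⟪(Submodule.orthogonalProjection G a : E), (Submodule.orthogonalProjection F b : E)⟫ := by
        rw [inner_sub_left, inner_sub_right, inner_sub_right]; ring
      have E1 : ⟪a, b - (Submodule.orthogonalProjection F b : E)⟫ = 0 := hgo a ha
      have E1' : ⟪a, b⟫ - ⟪a, (Submodule.orthogonalProjection F b : E)⟫ = 0 := by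
        rw [← inner_sub_right]; exact E1
      have E2 : ⟪b, a - (Submodule.orthogonalProjection G a : E)⟫ = 0 := hfo b hb
      have E2' : ⟪b, a⟫ - ⟪b, (Submodule.orthogonalProjection G a : E)⟫ = 0 := by
        rw [← inner_sub_right]; exact E2
      have c1 : ⟪b, a⟫ = ⟪a, b⟫ := (real_inner_comm b a).symm
      have c2 : ⟪b, (Submodule.orthogonalProjection G a : E)⟫
          = ⟪(Submodule.orthogonalProjection G a : E), b⟫ := (real_inner_comm _ _).symm
      rw [E0] at h0
      linarith
    have hPF : ∀ b ∈ G, (Submodule.orthogonalProjection F b : E) = 0 := by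
      intro b hb
      have hcF : (Submodule.orthogonalProjection F b : E) ∈ F := (Submodule.orthogonalProjection F b).2
      have h1 : ⟪(Submodule.orthogonalProjection F b : E), b⟫
          = ⟪(Submodule.orthogonalProjection G (Submodule.orthogonalProjection F b : E) : E),
              (Submodule.orthogonalProjection F (b) : E)⟫ := by
        have := key (Submodule.orthogonalProjection F b : E) hcF b hb
        exact this
      -- abbreviations
      set c : E := (Submodule.orthogonalProjection F b : E) with hcdef
      set d : E := (Submodule.orthogonalProjection G c : E) with hddef
      have hdG : d ∈ G := (Submodule.orthogonalProjection G c).2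
      have h2 : ⟪c, b⟫ = ⟪c, c⟫ := by
        have h : ⟪c, b - c⟫ = 0 :=
          Submodule.sub_starProjection_mem_orthogonal (K := F) b c hcF
        have h' : ⟪c, b⟫ - ⟪c, c⟫ = 0 := by rw [← inner_sub_right]; exact h
        linarith
      have h3 : ⟪d, c⟫ = ⟪d, d⟫ := by
        have h : ⟪d, c - d⟫ = 0 :=
          Submodule.sub_starProjection_mem_orthogonal (K := G) c d hdG
        have h' : ⟪d, c⟫ - ⟪d, d⟫ = 0 := by rw [← inner_sub_right]; exact h
        linarith
      have hcc : ⟪c, c⟫ = ⟪d, d⟫ := by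
        rw [h2] at h1; rw [h1, h3]
      have hcd : ⟪c - d, c - d⟫ = (0:ℝ) := by
        have e1 : ⟪c - d, c - d⟫ = ⟪c, c⟫ - ⟪c, d⟫ - ⟪d, c⟫ + ⟪d, d⟫ := by
          rw [inner_sub_left, inner_sub_right, inner_sub_right]; ring
        have e2 : ⟪c, d⟫ = ⟪d, c⟫ := (real_inner_comm c d).symm
        rw [e1, e2, h3]
        linarith
      have hcd0 : c - d = 0 := inner_self_eq_zero.mp hcd
      have hcG : c ∈ G := by
        have hcd' : c = d := by rwa [sub_eq_zero] at hcd0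
        rw [hcd']; exact hdG
      have : c ∈ F ⊓ G := ⟨hcF, hcG⟩
      rw [hFG] at this
      simpa using this
    intro a ha b hb
    rw [key a ha b hb, hPF b hb, inner_zero_right]
  · intro H f hf hfG g hg hgF
    obtain ⟨a, haF, b, hbG, rfl⟩ := Submodule.mem_sup.mp hf
    have hb0 : b = 0 := by
      have h1 : ⟪a + b, b⟫ = 0 := hfG b hbG
      have h2 : ⟪a, b⟫ = 0 := H a haF b hbG
      have h3 : ⟪a + b, b⟫ = ⟪a, b⟫ + ⟪b, b⟫ := inner_add_left a b b
      have h4 : ⟪b, b⟫ = (0:ℝ) := by rw [h3, h2] at h1; linarith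
      exact inner_self_eq_zero.mp h4
    subst hb0
    rw [add_zero, real_inner_comm]
    exact hgF a haF

section Setup
variable {Ω : Type*} [MeasurableSpace Ω] (μ : Measure Ω) [IsProbabilityMeasure μ]
  {p m : ℕ} (X : Ω → Fin p → Fin (m + 1))

/-- The centered indicator functions. -/
def eV (q : Fin p × Fin m) : Ω → ℝ :=
  fun ω => Vfun (X ω q.1) q.2 - expec μ (fun ω' => Vfun (X ω' q.1) q.2)

lemma Vfun_abs_le {x : Fin (m + 1)} {a : Fin m} : |Vfun x a| ≤ 1 := by
  unfold Vfun; split <;> norm_num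

lemma integrable_bdd {f : Ω → ℝ} (hf : Measurable f) {C : ℝ} (hC : ∀ ω, |f ω| ≤ C) :
    Integrable f μ := by
  refine ⟨hf.aestronglyMeasurable, HasFiniteIntegral.of_bounded (C := C) ?_⟩
  exact Filter.Eventually.of_forall (fun ω => by simpa [Real.norm_eq_abs] using hC ω)

variable (hX : ∀ k, Measurable fun ω => X ω k)
include hX

lemma meas_VX (k : Fin p) (a : Fin m) : Measurable fun ω => Vfun (X ω k) a :=
  (measurable_from_top (f := fun x : Fin (m+1) => Vfun x a)).comp (hX k)

lemma integrable_VX (k : Fin p) (a : Fin m) :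
    Integrable (fun ω => Vfun (X ω k) a) μ :=
  integrable_bdd μ (meas_VX X hX k a) (fun ω => Vfun_abs_le)

lemma expec_VX_abs_le (k : Fin p) (a : Fin m) :
    |expec μ (fun ω => Vfun (X ω k) a)| ≤ 1 := by
  have h1 : |∫ ω, Vfun (X ω k) a ∂μ| ≤ ∫ ω, |Vfun (X ω k) a| ∂μ := by
    simpa [Real.norm_eq_abs] using
      norm_integral_le_integral_norm (μ := μ) (f := fun ω => Vfun (X ω k) a)
  have h2 : ∫ ω, |Vfun (X ω k) a| ∂μ ≤ ∫ _ω, (1:ℝ) ∂μ := by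
    refine integral_mono (integrable_VX μ X hX k a).abs (integrable_const 1) ?_
    intro ω; exact Vfun_abs_le
  have h3 : ∫ _ω, (1:ℝ) ∂μ = 1 := by simp
  calc |expec μ (fun ω => Vfun (X ω k) a)| = |∫ ω, Vfun (X ω k) a ∂μ| := rfl
    _ ≤ ∫ ω, |Vfun (X ω k) a| ∂μ := h1
    _ ≤ 1 := by rw [← h3]; exact h2

lemma meas_eV (q : Fin p × Fin m) : Measurable (eV μ X q) :=
  (meas_VX X hX q.1 q.2).sub measurable_const

lemma abs_eV_le (q : Fin p × Fin m) (ω : Ω) : |eV μ X q ω| ≤ 2 := by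
  have h1 : |Vfun (X ω q.1) q.2| ≤ 1 := Vfun_abs_le
  have h2 := expec_VX_abs_le μ X hX q.1 q.2
  have habs : |eV μ X q ω| ≤ |Vfun (X ω q.1) q.2| + |expec μ (fun ω' => Vfun (X ω' q.1) q.2)| :=
    abs_sub _ _
  calc |eV μ X q ω| ≤ |Vfun (X ω q.1) q.2| + |expec μ (fun ω' => Vfun (X ω' q.1) q.2)| :=
        habs
    _ ≤ 2 := by linarith

lemma integrable_eV (q : Fin p × Fin m) : Integrable (eV μ X q) μ :=
  integrable_bdd μ (meas_eV μ X hX q) (abs_eV_le μ X hX q)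

lemma integrable_eV_mul (q r : Fin p × Fin m) :
    Integrable (fun ω => eV μ X q ω * eV μ X r ω) μ := by
  refine integrable_bdd μ ((meas_eV μ X hX q).mul (meas_eV μ X hX r)) (C := 4) fun ω => ?_
  rw [abs_mul]
  have h1 := abs_eV_le μ X hX q ω
  have h2 := abs_eV_le μ X hX r ω
  nlinarith [abs_nonneg (eV μ X q ω), abs_nonneg (eV μ X r ω)]

lemma gram_eV (q r : Fin p × Fin m) :
    expec μ (fun ω => eV μ X q ω * eV μ X r ω) =
      covRV μ (fun ω => Vfun (X ω q.1) q.2) (fun ω => Vfun (X ω r.1) r.2) := by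
  set f : Ω → ℝ := fun ω => Vfun (X ω q.1) q.2 with hf
  set g : Ω → ℝ := fun ω => Vfun (X ω r.1) r.2 with hg
  set c : ℝ := expec μ f with hc
  set d : ℝ := expec μ g with hd
  have hfm : Integrable f μ := integrable_VX μ X hX q.1 q.2
  have hgm : Integrable g μ := integrable_VX μ X hX r.1 r.2
  have hfg : Integrable (fun ω => f ω * g ω) μ := by
    refine integrable_bdd μ ((meas_VX X hX q.1 q.2).mul (meas_VX X hX r.1 r.2)) (C := 1)
      fun ω => ?_
    rw [abs_mul]
    have h1 : |f ω| ≤ 1 := Vfun_abs_le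
    have h2 : |g ω| ≤ 1 := Vfun_abs_le
    nlinarith [abs_nonneg (f ω), abs_nonneg (g ω)]
  have key : (fun ω => eV μ X q ω * eV μ X r ω)
      = fun ω => f ω * g ω - (d * f ω + c * g ω - c * d) := by
    funext ω
    show (f ω - c) * (g ω - d) = _
    ring
  have hAdd : Integrable (fun ω => d * f ω + c * g ω) μ :=
    (hfm.const_mul d).add (hgm.const_mul c)
  have hint2 : Integrable (fun ω => d * f ω + c * g ω - c * d) μ :=
    hAdd.sub (integrable_const _)
  rw [covRV]
  show expec μ _ = expec μ (fun ω => f ω * g ω) - c * d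
  rw [key]
  unfold expec
  rw [integral_sub hfg hint2, integral_sub hAdd
    (integrable_const _), integral_add (hfm.const_mul d) (hgm.const_mul c),
    integral_const_mul, integral_const_mul, integral_const]
  have hμ : μ.real Set.univ = 1 := by simp
  rw [hμ]
  show _ = ∫ ω, f ω * g ω ∂μ - c * d
  have hcf : ∫ ω, f ω ∂μ = c := rfl
  have hdg : ∫ ω, g ω ∂μ = d := rfl
  rw [hcf, hdg, one_smul]
  ring

end Setup

lemma Vfun_decomp {m : ℕ} (φ : Fin (m + 1) → ℝ) (x : Fin (m + 1)) :
    φ x = φ 0 + ∑ a : Fin m, (φ (Fin.succ a) - φ 0) * Vfun x a := by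
  induction x using Fin.cases with
  | zero =>
    have h : ∀ a : Fin m, Vfun (0 : Fin (m + 1)) a = 0 := by
      intro a; simp [Vfun]
    simp [h]
  | succ a₀ =>
    have h : ∀ a : Fin m, Vfun (Fin.succ a₀) a = if a = a₀ then 1 else 0 := by
      intro a
      simp only [Vfun, Fin.val_succ]
      by_cases hh : a = a₀
      · subst hh; simp
      · have hne : (a₀ : ℕ) + 1 ≠ (a : ℕ) + 1 := by
          intro hc
          exact hh (Fin.ext (by omega)).symm
        simp [hh, hne]; omega
    have : ∑ a : Fin m, (φ (Fin.succ a) - φ 0) * Vfun (Fin.succ a₀) a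
        = φ (Fin.succ a₀) - φ 0 := by
      rw [Finset.sum_congr rfl (fun a _ => by rw [h a])]
      simp [Finset.sum_ite_eq']
    rw [this]; ring

section Setup2
variable {Ω : Type*} [MeasurableSpace Ω] (μ : Measure Ω) [IsProbabilityMeasure μ]
  {p m : ℕ} (X : Ω → Fin p → Fin (m + 1)) (hX : ∀ k, Measurable fun ω => X ω k)
include hX

lemma addSpace_eq_span (A : Set (Fin p)) :
    addSpace μ X A = Submodule.span ℝ (eV μ X '' {q | q.1 ∈ A}) := by
  apply le_antisymm
  · rw [addSpace, Submodule.span_le]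
    rintro f ⟨k, hk, φ, hφ0, rfl⟩
    set d : Fin m → ℝ := fun a => φ (Fin.succ a) - φ 0 with hd
    set c : Fin m → ℝ := fun a => expec μ (fun ω => Vfun (X ω k) a) with hc
    have hdec : (fun ω => φ (X ω k)) = fun ω => φ 0 + ∑ a : Fin m, d a * Vfun (X ω k) a :=
      funext fun ω => Vfun_decomp φ (X ω k)
    have hsum0 : φ 0 + ∑ a : Fin m, d a * c a = 0 := by
      rw [hdec] at hφ0
      unfold expec at hφ0
      rw [integral_add (integrable_const _)
        (integrable_finset_sum _ (fun a _ => ((integrable_VX μ X hX k a).const_mul (d a)))),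
        integral_finset_sum _ (fun a _ => ((integrable_VX μ X hX k a).const_mul (d a))),
        integral_const] at hφ0
      simp only [probReal_univ, one_smul] at hφ0
      rw [← hφ0]
      congr 1
      exact Finset.sum_congr rfl fun a _ => (integral_const_mul (d a) _).symm
    have hrep : (fun ω => φ (X ω k)) = ∑ a : Fin m, d a • eV μ X (k, a) := by
      funext ω
      rw [Vfun_decomp φ (X ω k)]
      have : (∑ a : Fin m, d a • eV μ X (k, a)) ω
          = ∑ a : Fin m, d a * (Vfun (X ω k) a - c a) := by
        rw [Finset.sum_apply]
        exact Finset.sum_congr rfl fun a _ => rfl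
      rw [this]
      have h2 : ∑ a : Fin m, d a * (Vfun (X ω k) a - c a)
          = ∑ a : Fin m, d a * Vfun (X ω k) a - ∑ a : Fin m, d a * c a := by
        rw [← Finset.sum_sub_distrib]
        exact Finset.sum_congr rfl fun a _ => by ring
      rw [h2]
      linarith [hsum0]
    show (fun ω => φ (X ω k)) ∈ Submodule.span ℝ (eV μ X '' {q | q.1 ∈ A})
    rw [hrep]
    exact Submodule.sum_mem _ fun a _ =>
      Submodule.smul_mem _ _ (Submodule.subset_span ⟨(k, a), hk, rfl⟩)
  · rw [Submodule.span_le]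
    rintro f ⟨q, hq, rfl⟩
    refine Submodule.subset_span ⟨q.1, hq, fun x => Vfun x q.2 -
      expec μ (fun ω => Vfun (X ω q.1) q.2), ?_, rfl⟩
    unfold expec
    rw [integral_sub (integrable_VX μ X hX q.1 q.2) (integrable_const _), integral_const]
    simp [expec]

lemma mem_span_eV_iff (s : Set (Fin p × Fin m)) (f : Ω → ℝ) :
    f ∈ Submodule.span ℝ (eV μ X '' s) ↔
      ∃ w : Fin p × Fin m → ℝ, (∀ q, q ∉ s → w q = 0) ∧
        f = fun ω => ∑ q : Fin p × Fin m, w q * eV μ X q ω := by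
  constructor
  · intro hf
    induction hf using Submodule.span_induction with
    | mem x hx =>
      obtain ⟨q, hq, rfl⟩ := hx
      refine ⟨fun r => if r = q then 1 else 0, fun r hr => ?_, ?_⟩
      · simp only []
        rw [if_neg]; rintro rfl; exact hr hq
      · funext ω
        rw [Finset.sum_congr rfl (fun r _ => by rw [ite_mul, one_mul, zero_mul])]
        rw [Finset.sum_ite_eq' Finset.univ q (fun r => eV μ X r ω)]
        simp
    | zero => exact ⟨0, fun q _ => rfl, by funext ω; simp⟩
    | add x y _ _ hx hy =>
      obtain ⟨w1, hw1, rfl⟩ := hx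
      obtain ⟨w2, hw2, rfl⟩ := hy
      refine ⟨w1 + w2, fun q hq => by simp [hw1 q hq, hw2 q hq], ?_⟩
      funext ω
      rw [Pi.add_apply, ← Finset.sum_add_distrib]
      exact Finset.sum_congr rfl fun q _ => by simp [add_mul]
    | smul r x _ hx =>
      obtain ⟨w1, hw1, rfl⟩ := hx
      refine ⟨r • w1, fun q hq => by simp [hw1 q hq], ?_⟩
      funext ω
      rw [Pi.smul_apply, smul_eq_mul, Finset.mul_sum]
      exact Finset.sum_congr rfl fun q _ => by simp [mul_assoc]
  · rintro ⟨w, hw, rfl⟩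
    have : (fun ω => ∑ q : Fin p × Fin m, w q * eV μ X q ω)
        = ∑ q : Fin p × Fin m, w q • eV μ X q := by
      funext ω; rw [Finset.sum_apply]; exact Finset.sum_congr rfl fun q _ => rfl
    rw [this]
    refine Submodule.sum_mem _ fun q _ => ?_
    by_cases hq : q ∈ s
    · exact Submodule.smul_mem _ _ (Submodule.subset_span ⟨q, hq, rfl⟩)
    · rw [hw q hq, zero_smul]; exact Submodule.zero_mem _

lemma expec_sum_mul (w u : Fin p × Fin m → ℝ) :
    expec μ (fun ω => (∑ q : Fin p × Fin m, w q * eV μ X q ω) *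
        (∑ r : Fin p × Fin m, u r * eV μ X r ω))
      = ∑ q : Fin p × Fin m, ∑ r : Fin p × Fin m,
          w q * u r * expec μ (fun ω => eV μ X q ω * eV μ X r ω) := by
  have key : (fun ω => (∑ q : Fin p × Fin m, w q * eV μ X q ω) *
      (∑ r : Fin p × Fin m, u r * eV μ X r ω))
      = fun ω => ∑ q : Fin p × Fin m, ∑ r : Fin p × Fin m,
          w q * u r * (eV μ X q ω * eV μ X r ω) := by
    funext ω
    rw [Finset.sum_mul_sum]
    exact Finset.sum_congr rfl fun q _ => Finset.sum_congr rfl fun r _ => by ring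
  rw [expec, key]
  rw [integral_finset_sum _ (fun q _ => integrable_finset_sum _
    (fun r _ => ((integrable_eV_mul μ X hX q r).const_mul (w q * u r))))]
  refine Finset.sum_congr rfl fun q _ => ?_
  rw [integral_finset_sum _ (fun r _ => ((integrable_eV_mul μ X hX q r).const_mul (w q * u r)))]
  exact Finset.sum_congr rfl fun r _ => integral_const_mul _ _

end Setup2

/-- Submodule of vectors supported on a set of indices. -/
def suppSub {n : Type*} (s : Set n) : Submodule ℝ (n → ℝ) where
  carrier := {v | ∀ q ∉ s, v q = 0}
  add_mem' := fun ha hb q hq => by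
    simp only [Pi.add_apply, ha q hq, hb q hq, add_zero]
  zero_mem' := fun q hq => rfl
  smul_mem' := fun c v hv q hq => by
    simp only [Pi.smul_apply, hv q hq, smul_eq_mul, mul_zero]

lemma mem_suppSub {n : Type*} {s : Set n} {v : n → ℝ} :
    v ∈ suppSub s ↔ ∀ q ∉ s, v q = 0 := Iff.rfl

open Matrix in
theorem stmt1 {Ω : Type*} [MeasurableSpace Ω] (μ : Measure Ω) [IsProbabilityMeasure μ]
    (p m : ℕ) (X : Ω → Fin p → Fin (m + 1)) (hX : ∀ k, Measurable fun ω => X ω k)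
    (Sv : Matrix (Fin p × Fin m) (Fin p × Fin m) ℝ)
    (hSv : ∀ i j a b, Sv (i, a) (j, b) =
      covRV μ (fun ω => Vfun (X ω i) a) (fun ω => Vfun (X ω j) b))
    (hinv : IsUnit Sv) (i j : Fin p) (hij : i ≠ j) :
    ACI μ X {i} {j} ({i, j}ᶜ : Set (Fin p)) ↔
      ∀ a b : Fin m, Sv⁻¹ (i, a) (j, b) = 0 := by
  classical
  have hdet : IsUnit Sv.det := (Matrix.isUnit_iff_isUnit_det Sv).mp hinv
  set K := Sv⁻¹ with hKdef
  have hSvK : Sv * K = 1 := Matrix.mul_nonsing_inv Sv hdet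
  have hKSv : K * Sv = 1 := Matrix.nonsing_inv_mul Sv hdet
  have hSv' : ∀ q r : Fin p × Fin m, Sv q r =
      covRV μ (fun ω => Vfun (X ω q.1) q.2) (fun ω => Vfun (X ω r.1) r.2) := by
    intro q r
    have := hSv q.1 r.1 q.2 r.2
    simpa using this
  have hsym : ∀ q r, Sv q r = Sv r q := by
    intro q r
    rw [hSv' q r, hSv' r q, covRV, covRV]
    have h : (fun ω => Vfun (X ω q.1) q.2 * Vfun (X ω r.1) r.2)
        = fun ω => Vfun (X ω r.1) r.2 * Vfun (X ω q.1) q.2 := funext fun ω => mul_comm _ _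
    rw [h]; ring
  have hT : Svᵀ = Sv := Matrix.ext fun q r => hsym r q
  have hGram : ∀ q r, expec μ (fun ω => eV μ X q ω * eV μ X r ω) = Sv q r := by
    intro q r; rw [gram_eV μ X hX q r, hSv' q r]
  have hdot : ∀ w u : Fin p × Fin m → ℝ,
      expec μ (fun ω => (∑ q : Fin p × Fin m, w q * eV μ X q ω) *
          (∑ r : Fin p × Fin m, u r * eV μ X r ω)) = w ⬝ᵥ (Sv *ᵥ u) := by
    intro w u
    rw [expec_sum_mul μ X hX w u]
    simp only [dotProduct, Matrix.mulVec, Finset.mul_sum]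
    refine Finset.sum_congr rfl fun q _ => Finset.sum_congr rfl fun r _ => ?_
    rw [hGram q r]; ring
  have hPSD : Sv.PosSemidef := by
    refine Matrix.posSemidef_iff_dotProduct_mulVec.mpr ⟨Matrix.ext fun q r => ?_, fun x => ?_⟩
    · show star (Sv r q) = Sv q r
      rw [star_trivial]; exact hsym r q
    · have hx : star x = x := funext fun q => star_trivial _
      rw [hx, ← hdot x x]
      exact integral_nonneg fun ω => mul_self_nonneg _
  have hmulKS : ∀ v : Fin p × Fin m → ℝ, K *ᵥ (Sv *ᵥ v) = v := by
    intro v; rw [Matrix.mulVec_mulVec, hKSv, Matrix.one_mulVec]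
  have hmulSK : ∀ v : Fin p × Fin m → ℝ, Sv *ᵥ (K *ᵥ v) = v := by
    intro v; rw [Matrix.mulVec_mulVec, hSvK, Matrix.one_mulVec]
  have hPD : Sv.PosDef := by
    refine Matrix.posDef_iff_dotProduct_mulVec.mpr ⟨hPSD.isHermitian, fun x hx0 => ?_⟩
    rcases lt_or_eq_of_le ((Matrix.posSemidef_iff_dotProduct_mulVec.mp hPSD).2 x) with h | h
    · exact h
    · exfalso
      have h0 : Sv *ᵥ x = 0 := (hPSD.dotProduct_mulVec_zero_iff x).mp h.symm
      exact hx0 (by rw [← hmulKS x, h0, Matrix.mulVec_zero])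
  have hKsym : ∀ q r, K q r = K r q := by
    intro q r
    have h1 : Kᵀ = K := by rw [hKdef, Matrix.transpose_nonsing_inv, hT]
    calc K q r = Kᵀ r q := rfl
      _ = K r q := by rw [h1]
  set F : Submodule ℝ (Fin p × Fin m → ℝ) :=
    (suppSub {q : Fin p × Fin m | q.1 = i}).map K.mulVecLin with hFdef
  set G : Submodule ℝ (Fin p × Fin m → ℝ) :=
    (suppSub {q : Fin p × Fin m | q.1 = j}).map K.mulVecLin with hGdef
  have hmapmem : ∀ (s : Set (Fin p × Fin m)) (v : Fin p × Fin m → ℝ),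
      v ∈ (suppSub s).map K.mulVecLin ↔ ∀ q ∉ s, (Sv *ᵥ v) q = 0 := by
    intro s v
    constructor
    · rintro ⟨z, hz, rfl⟩ q hq
      rw [Matrix.mulVecLin_apply, hmulSK]
      exact hz q hq
    · intro h
      exact ⟨Sv *ᵥ v, h, by rw [Matrix.mulVecLin_apply, hmulKS]⟩
  have hFGbot : F ⊓ G = ⊥ := by
    rw [eq_bot_iff]
    rintro v ⟨hvF, hvG⟩
    have hv0 : Sv *ᵥ v = 0 := funext fun q => by
      by_cases hq : q.1 = i
      · exact (hmapmem _ v).mp hvG q (fun hc => hij (hq.symm.trans hc))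
      · exact (hmapmem _ v).mp hvF q hq
    rw [Submodule.mem_bot, ← hmulKS v, hv0, Matrix.mulVec_zero]
  have hsupmem : ∀ v : Fin p × Fin m → ℝ,
      v ∈ F ⊔ G ↔ ∀ q : Fin p × Fin m, q.1 ≠ i → q.1 ≠ j → (Sv *ᵥ v) q = 0 := by
    intro v
    have hsup : F ⊔ G = (suppSub ({q : Fin p × Fin m | q.1 = i} ∪
        {q : Fin p × Fin m | q.1 = j})).map K.mulVecLin := by
      rw [hFdef, hGdef, ← Submodule.map_sup]
      congr 1
      apply le_antisymm
      · apply sup_le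
        · intro z hz q hq; exact hz q (fun hc => hq (Or.inl hc))
        · intro z hz q hq; exact hz q (fun hc => hq (Or.inr hc))
      · intro z hz
        rw [Submodule.mem_sup]
        refine ⟨fun q => if q.1 = i then z q else 0, fun q hq => ?_,
          fun q => if q.1 = i then 0 else z q, fun q hq => ?_, ?_⟩
        · show (if q.1 = i then z q else 0) = 0
          exact if_neg hq
        · show (if q.1 = i then 0 else z q) = 0
          by_cases h1 : q.1 = i
          · rw [if_pos h1]
          · rw [if_neg h1]; exact hz q (fun hc => hc.elim h1 hq)
        · funext q
          show (if q.1 = i then z q else 0) + (if q.1 = i then 0 else z q) = z q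
          by_cases h1 : q.1 = i <;> simp [h1]
    rw [hsup, hmapmem]
    constructor
    · intro h q h1 h2; exact h q (fun hc => hc.elim h1 h2)
    · intro h q hq
      exact h q (fun hc => hq (Or.inl hc)) (fun hc => hq (Or.inr hc))
  have hperp : ∀ (c : Fin p) (v : Fin p × Fin m → ℝ),
      (∀ b ∈ (suppSub {q : Fin p × Fin m | q.1 = c}).map K.mulVecLin,
          v ⬝ᵥ (Sv *ᵥ b) = 0) ↔ ∀ q : Fin p × Fin m, q.1 = c → v q = 0 := by
    intro c v
    constructor
    · intro h q hq
      have hmem : K.mulVecLin (fun r => if r = q then (1:ℝ) else 0) ∈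
          (suppSub {q : Fin p × Fin m | q.1 = c}).map K.mulVecLin := by
        refine ⟨_, fun r hr => ?_, rfl⟩
        show (if r = q then (1:ℝ) else 0) = 0
        exact if_neg (fun hc => hr (by rw [hc]; exact hq))
      have h0 := h _ hmem
      rw [Matrix.mulVecLin_apply, hmulSK] at h0
      simpa [dotProduct, mul_ite, Finset.sum_ite_eq'] using h0
    · rintro h b ⟨z, hz, rfl⟩
      rw [Matrix.mulVecLin_apply, hmulSK]
      apply Finset.sum_eq_zero
      intro q _
      by_cases hq : q.1 = c
      · rw [h q hq, zero_mul]
      · rw [hz q hq, mul_zero]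
  have hKtrans : (∀ a ∈ F, ∀ b ∈ G, a ⬝ᵥ (Sv *ᵥ b) = 0) ↔
      ∀ a b : Fin m, K (i, a) (j, b) = 0 := by
    constructor
    · intro h a b
      have ha : K.mulVecLin (fun r => if r = ((i, a) : Fin p × Fin m) then (1:ℝ) else 0) ∈ F := by
        rw [hFdef]
        refine ⟨_, fun r hr => ?_, rfl⟩
        show (if r = ((i, a) : Fin p × Fin m) then (1:ℝ) else 0) = 0
        exact if_neg (fun hc => hr (by rw [hc]; rfl))
      have hb : K.mulVecLin (fun r => if r = ((j, b) : Fin p × Fin m) then (1:ℝ) else 0) ∈ G := by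
        rw [hGdef]
        refine ⟨_, fun r hr => ?_, rfl⟩
        show (if r = ((j, b) : Fin p × Fin m) then (1:ℝ) else 0) = 0
        exact if_neg (fun hc => hr (by rw [hc]; rfl))
      have h0 := h _ ha _ hb
      rw [Matrix.mulVecLin_apply, Matrix.mulVecLin_apply, hmulSK] at h0
      have e : (K *ᵥ (fun r => if r = ((i, a) : Fin p × Fin m) then (1:ℝ) else 0)) ⬝ᵥ
          (fun r => if r = ((j, b) : Fin p × Fin m) then (1:ℝ) else 0) = K (j, b) (i, a) := by
        simp [dotProduct, Matrix.mulVec, mul_ite, ite_mul, Finset.sum_ite_eq']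
      rw [e] at h0
      rw [hKsym] at h0
      exact h0
    · intro h a haF b hbG
      rw [hFdef] at haF; rw [hGdef] at hbG
      obtain ⟨z, hz, rfl⟩ := haF
      obtain ⟨z', hz', rfl⟩ := hbG
      rw [Matrix.mulVecLin_apply, Matrix.mulVecLin_apply, hmulSK]
      apply Finset.sum_eq_zero
      intro q _
      by_cases hq : q.1 = j
      · have hzero : (K *ᵥ z) q = 0 := by
          apply Finset.sum_eq_zero
          intro r _
          show K q r * z r = 0
          by_cases hr : r.1 = i
          · have hqr : K q r = 0 := by
              have hq' : q = (j, q.2) := by rw [← hq]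
              have hr' : r = (i, r.2) := by rw [← hr]
              rw [hq', hr', hKsym]
              exact h r.2 q.2
            rw [hqr, zero_mul]
          · rw [hz r hr, mul_zero]
        show (K *ᵥ z) q * z' q = 0
        rw [hzero, zero_mul]
      · show (K *ᵥ z) q * z' q = 0
        rw [hz' q hq, mul_zero]
  -- set translations
  have hAset : ({i} ∪ ({i, j}ᶜ) : Set (Fin p)) = ({j}ᶜ : Set (Fin p)) := by
    ext x
    simp only [Set.mem_union, Set.mem_singleton_iff, Set.mem_compl_iff, Set.mem_insert_iff]
    constructor
    · rintro (rfl | h)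
      · exact hij
      · exact fun hx => h (Or.inr hx)
    · intro h
      by_cases hx : x = i
      · exact Or.inl hx
      · exact Or.inr (fun hc => hc.elim hx h)
  have hBset : ({j} ∪ ({i, j}ᶜ) : Set (Fin p)) = ({i}ᶜ : Set (Fin p)) := by
    ext x
    simp only [Set.mem_union, Set.mem_singleton_iff, Set.mem_compl_iff, Set.mem_insert_iff]
    constructor
    · rintro (rfl | h)
      · exact fun hc => hij hc.symm
      · exact fun hx => h (Or.inl hx)
    · intro h
      by_cases hx : x = j
      · exact Or.inl hx
      · exact Or.inr (fun hc => hc.elim h hx)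
  have hfmemJ : ∀ f : Ω → ℝ, f ∈ addSpace μ X ({j}ᶜ : Set (Fin p)) ↔
      ∃ w : Fin p × Fin m → ℝ, (∀ q : Fin p × Fin m, q.1 = j → w q = 0) ∧
        f = fun ω => ∑ q : Fin p × Fin m, w q * eV μ X q ω := by
    intro f
    rw [addSpace_eq_span μ X hX, mem_span_eV_iff μ X hX]
    constructor
    · rintro ⟨w, hw, rfl⟩
      exact ⟨w, fun q hq => hw q (by simp [hq]), rfl⟩
    · rintro ⟨w, hw, rfl⟩
      refine ⟨w, fun q hq => hw q ?_, rfl⟩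
      simpa using hq
  have hfmemI : ∀ f : Ω → ℝ, f ∈ addSpace μ X ({i}ᶜ : Set (Fin p)) ↔
      ∃ w : Fin p × Fin m → ℝ, (∀ q : Fin p × Fin m, q.1 = i → w q = 0) ∧
        f = fun ω => ∑ q : Fin p × Fin m, w q * eV μ X q ω := by
    intro f
    rw [addSpace_eq_span μ X hX, mem_span_eV_iff μ X hX]
    constructor
    · rintro ⟨w, hw, rfl⟩
      exact ⟨w, fun q hq => hw q (by simp [hq]), rfl⟩
    · rintro ⟨w, hw, rfl⟩
      refine ⟨w, fun q hq => hw q ?_, rfl⟩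
      simpa using hq
  have hfmemC : ∀ f : Ω → ℝ, f ∈ addSpace μ X ({i, j}ᶜ : Set (Fin p)) ↔
      ∃ w : Fin p × Fin m → ℝ, (∀ q : Fin p × Fin m, q.1 = i ∨ q.1 = j → w q = 0) ∧
        f = fun ω => ∑ q : Fin p × Fin m, w q * eV μ X q ω := by
    intro f
    rw [addSpace_eq_span μ X hX, mem_span_eV_iff μ X hX]
    constructor
    · rintro ⟨w, hw, rfl⟩
      refine ⟨w, fun q hq => hw q ?_, rfl⟩
      simp only [Set.mem_setOf_eq, Set.mem_compl_iff, Set.mem_insert_iff,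
        Set.mem_singleton_iff]
      tauto
    · rintro ⟨w, hw, rfl⟩
      refine ⟨w, fun q hq => hw q ?_, rfl⟩
      simp only [Set.mem_setOf_eq, Set.mem_compl_iff, Set.mem_insert_iff,
        Set.mem_singleton_iff] at hq
      tauto
  have hexp_eV : ∀ (w : Fin p × Fin m → ℝ) (q : Fin p × Fin m),
      expec μ (fun ω => (∑ r : Fin p × Fin m, w r * eV μ X r ω) * eV μ X q ω)
        = (Sv *ᵥ w) q := by
    intro w q
    have hδ : (fun ω => ∑ r : Fin p × Fin m, (if r = q then (1:ℝ) else 0) * eV μ X r ω)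
        = eV μ X q := by
      funext ω
      simp [ite_mul, Finset.sum_ite_eq']
    rw [← hδ]
    rw [hdot w (fun r => if r = q then (1:ℝ) else 0)]
    have h1 : (Sv *ᵥ fun r => if r = q then (1:ℝ) else 0) = fun r => Sv r q := by
      funext r
      simp [Matrix.mulVec, dotProduct, mul_ite, Finset.sum_ite_eq']
    rw [h1]
    simp only [dotProduct, Matrix.mulVec]
    exact Finset.sum_congr rfl fun r _ => by rw [hsym q r]; ring
  have hdotswap : ∀ w u : Fin p × Fin m → ℝ,
      w ⬝ᵥ (Sv *ᵥ u) = ∑ q : Fin p × Fin m, (Sv *ᵥ w) q * u q := by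
    intro w u
    rw [dotProduct_mulVec]
    have h1 : w ᵥ* Sv = Sv *ᵥ w := by
      rw [← Matrix.mulVec_transpose, hT]
    rw [h1, dotProduct]
  have hperpC : ∀ w : Fin p × Fin m → ℝ,
      (∀ h ∈ addSpace μ X ({i, j}ᶜ : Set (Fin p)),
          expec μ (fun ω => (∑ r : Fin p × Fin m, w r * eV μ X r ω) * h ω) = 0)
        ↔ ∀ q : Fin p × Fin m, q.1 ≠ i → q.1 ≠ j → (Sv *ᵥ w) q = 0 := by
    intro w
    constructor
    · intro h q h1 h2
      have hqC : q.1 ∈ ({i, j}ᶜ : Set (Fin p)) := by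
        simp only [Set.mem_compl_iff, Set.mem_insert_iff, Set.mem_singleton_iff]
        tauto
      have hmem : eV μ X q ∈ addSpace μ X ({i, j}ᶜ : Set (Fin p)) := by
        rw [addSpace_eq_span μ X hX]
        exact Submodule.subset_span ⟨q, hqC, rfl⟩
      have h0 := h _ hmem
      rw [hexp_eV w q] at h0
      exact h0
    · intro h g hg
      obtain ⟨u, hu, rfl⟩ := (hfmemC g).mp hg
      have hcalc : expec μ (fun ω => (∑ r : Fin p × Fin m, w r * eV μ X r ω) *
          (∑ r : Fin p × Fin m, u r * eV μ X r ω)) = w ⬝ᵥ (Sv *ᵥ u) := hdot w u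
      rw [hcalc, hdotswap]
      apply Finset.sum_eq_zero
      intro q _
      by_cases h1 : q.1 = i
      · rw [hu q (Or.inl h1), mul_zero]
      · by_cases h2 : q.1 = j
        · rw [hu q (Or.inr h2), mul_zero]
        · rw [h q h1 h2, zero_mul]
  -- the abstract lemma, with the inner product coming from the positive definite matrix `Sv`
  have habs : (∀ f ∈ F ⊔ G, (∀ b ∈ G, f ⬝ᵥ (Sv *ᵥ b) = 0) →
      ∀ g ∈ F ⊔ G, (∀ a ∈ F, g ⬝ᵥ (Sv *ᵥ a) = 0) → f ⬝ᵥ (Sv *ᵥ g) = 0) ↔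
      (∀ a ∈ F, ∀ b ∈ G, a ⬝ᵥ (Sv *ᵥ b) = 0) := by
    have hin : ∀ x y : Fin p × Fin m → ℝ, x ⬝ᵥ (Sv *ᵥ y) = (Sv *ᵥ y) ⬝ᵥ star x := by
      intro x y; rw [dotProduct_comm]; simp
    simp only [hin]
    exact @aci_abstract (Fin p × Fin m → ℝ) (Matrix.toNormedAddCommGroup Sv hPD)
      (Matrix.toInnerProductSpace Sv hPD.posSemidef)
      (by infer_instance) F G hFGbot
  constructor
  · intro hACI
    refine hKtrans.mp (habs.mp ?_)
    intro v hv hvG u hu huF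
    have hw1 : ∀ q : Fin p × Fin m, q.1 = j → v q = 0 := by
      refine (hperp j v).mp ?_
      rw [← hGdef]; exact hvG
    have hw2 := (hsupmem v).mp hv
    have hu1 : ∀ q : Fin p × Fin m, q.1 = i → u q = 0 := by
      refine (hperp i u).mp ?_
      rw [← hFdef]; exact huF
    have hu2 := (hsupmem u).mp hu
    have hfA : (fun ω => ∑ q : Fin p × Fin m, v q * eV μ X q ω) ∈
        addSpace μ X (({i} : Set (Fin p)) ∪ ({i, j}ᶜ : Set (Fin p))) := by
      rw [hAset]; exact (hfmemJ _).mpr ⟨v, hw1, rfl⟩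
    have hgB : (fun ω => ∑ q : Fin p × Fin m, u q * eV μ X q ω) ∈
        addSpace μ X (({j} : Set (Fin p)) ∪ ({i, j}ᶜ : Set (Fin p))) := by
      rw [hBset]; exact (hfmemI _).mpr ⟨u, hu1, rfl⟩
    have hfperp := (hperpC v).mpr hw2
    have hgperp := (hperpC u).mpr hu2
    have h0 : expec μ (fun ω => (∑ q : Fin p × Fin m, v q * eV μ X q ω) *
        (∑ r : Fin p × Fin m, u r * eV μ X r ω)) = 0 :=
      hACI _ hfA hfperp _ hgB hgperp
    rw [hdot v u] at h0
    exact h0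
  · intro hK0
    intro f hf hfperp g hg hgperp
    rw [hAset] at hf
    rw [hBset] at hg
    obtain ⟨v, hv1, rfl⟩ := (hfmemJ f).mp hf
    obtain ⟨u, hu1, rfl⟩ := (hfmemI g).mp hg
    have hv2 := (hperpC v).mp hfperp
    have hu2 := (hperpC u).mp hgperp
    show expec μ (fun ω => (∑ q : Fin p × Fin m, v q * eV μ X q ω) *
        (∑ r : Fin p × Fin m, u r * eV μ X r ω)) = 0
    rw [hdot v u]
    refine habs.mpr (hKtrans.mpr hK0) v ((hsupmem v).mpr hv2) ?_ u ((hsupmem u).mpr hu2) ?_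
    · intro b hb
      exact (hperp j v).mpr hv1 b (by rw [← hGdef]; exact hb)
    · intro a ha
      exact (hperp i u).mpr hu1 a (by rw [← hFdef]; exact ha)
end
end

section
/- Let X = (X^1,...,X^p) ∈ {−1,1}^p, p ≥ 3, follow a symmetric Ising model with respect to the graph G = (V, E). Fix a pair i ≠ j. If there exists an (i,j)-separator R on G with |R| ≤ 2, then conditional independence of X^i and X^j given X^{−{i,j}} implies that X^i and X^j are additively conditionally independent given X^{−{i,j}}. -/
open MeasureTheory

noncomputable section

/-- Adjacency relation of the reduced graph obtained from `E` by removing the edge `(i,j)`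
(in both directions) and all edges between `R` and its complement. -/
def reducedAdj {ι : Type*} (E : Set (ι × ι)) (i j : ι) (R : Set ι) : ι → ι → Prop :=
  fun k l => (k, l) ∈ E ∧ ¬(k = i ∧ l = j) ∧ ¬(k = j ∧ l = i) ∧ (k ∈ R ↔ l ∈ R)

/-- `R ⊆ V ∖ {i,j}` is an `(i,j)`-separator: in the reduced graph, `i` and `j` lie in
distinct connected components, i.e. `j` is not reachable from `i`. -/
def IsSeparator {ι : Type*} (E : Set (ι × ι)) (i j : ι) (R : Set ι) : Prop :=
  i ∉ R ∧ j ∉ R ∧ ¬ Relation.ReflTransGen (reducedAdj E i j R) i j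

/-- The node set of the connected component of `k` in the reduced graph. -/
def component {ι : Type*} (E : Set (ι × ι)) (i j : ι) (R : Set ι) (k : ι) : Set ι :=
  {l | Relation.ReflTransGen (reducedAdj E i j R) k l}

/-- A real-valued node variable `X^k` has linear conditional mean with respect to `X^D`:
either `D = ∅`, or there is `ξ ∈ ℝ^D` with `E(X^k − E X^k | X^D) = ξᵀ (X^D − E X^D)` a.s.
(stated via integration over each event `{X^D = z}`). -/
def LinCondMean {Ω ι : Type*} [MeasurableSpace Ω] [Fintype ι] (μ : MeasureTheory.Measure Ω)
    (X : Ω → ι → ℝ) (k : ι) (D : Set ι) : Prop :=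
  D = ∅ ∨ ∃ ξ : ι → ℝ, (∀ d, d ∉ D → ξ d = 0) ∧ ∀ z : ι → ℝ,
    (∫ ω in {ω | ∀ d ∈ D, X ω d = z d}, (X ω k - expec μ fun ω' => X ω' k) ∂μ) =
      (∑ d : ι, ξ d * (z d - expec μ fun ω' => X ω' d)) *
        (μ {ω | ∀ d ∈ D, X ω d = z d}).toReal

/-- The `±1` vector associated with a Boolean configuration. -/
def signVec {p : ℕ} (s : Fin p → Bool) : Fin p → ℝ := fun k => if s k then 1 else -1

/-- The (unnormalized) symmetric Ising weight `exp(Σ_{i<j} β_{ij} x^i x^j)`. -/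
def isingWeight {p : ℕ} (β : Matrix (Fin p) (Fin p) ℝ) (x : Fin p → ℝ) : ℝ :=
  Real.exp (∑ i : Fin p, ∑ j : Fin p, if i < j then β i j * x i * x j else 0)

/-- The partition function of the symmetric Ising model. -/
def isingZ {p : ℕ} (β : Matrix (Fin p) (Fin p) ℝ) : ℝ :=
  ∑ s : Fin p → Bool, isingWeight β (signVec s)

/-- `X` follows the symmetric Ising model with parameter `β` (symmetric, zero diagonal):
`X` takes values in `{−1,1}^p` and has p.m.f. `z(β)⁻¹ exp(Σ_{i<j} β_{ij} x^i x^j)`. -/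
def IsSymIsing {Ω : Type*} [MeasurableSpace Ω] (μ : MeasureTheory.Measure Ω) {p : ℕ}
    (X : Ω → Fin p → ℝ) (β : Matrix (Fin p) (Fin p) ℝ) : Prop :=
  β.IsSymm ∧ (∀ i, β i i = 0) ∧ (∀ ω k, X ω k = 1 ∨ X ω k = -1) ∧
    ∀ s : Fin p → Bool,
      μ {ω | ∀ k, X ω k = signVec s k} =
        ENNReal.ofReal (isingWeight β (signVec s) / isingZ β)

/-- The edge set of the (symmetric) Ising model: `(i,j) ∈ E` iff `i ≠ j` and `β_{ij} ≠ 0`. -/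
def isingEdges {p : ℕ} (β : Matrix (Fin p) (Fin p) ℝ) : Set (Fin p × Fin p) :=
  {e | e.1 ≠ e.2 ∧ β e.1 e.2 ≠ 0}

namespace Stmt5Aux

attribute [local instance] Classical.propDecidable

variable {p : ℕ} (β : Matrix (Fin p) (Fin p) ℝ)

/-- weight of a boolean configuration -/
def W (s : Fin p → Bool) : ℝ := isingWeight β (signVec s)

lemma W_pos (s : Fin p → Bool) : 0 < W β s := Real.exp_pos _

lemma Z_def : isingZ β = ∑ s : Fin p → Bool, W β s := rfl

lemma Z_pos : 0 < isingZ β := by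
  rw [Z_def]
  exact Finset.sum_pos (fun s _ => W_pos β s) ⟨fun _ => true, Finset.mem_univ _⟩

lemma signVec_not (s : Fin p → Bool) :
    signVec (fun k => !(s k)) = fun k => -(signVec s k) := by
  funext k; cases h : s k <;> simp [signVec, h]

lemma isingWeight_neg (x : Fin p → ℝ) :
    isingWeight β (fun k => -(x k)) = isingWeight β x := by
  unfold isingWeight
  congr 1
  refine Finset.sum_congr rfl fun u _ => Finset.sum_congr rfl fun v _ => ?_
  by_cases h : u < v
  · simp only [if_pos h]; ring
  · simp [h]

lemma W_not (s : Fin p → Bool) : W β (fun k => !(s k)) = W β s := by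
  unfold W
  rw [signVec_not, isingWeight_neg]

lemma sum_flip (F : (Fin p → Bool) → ℝ) :
    ∑ s : Fin p → Bool, F s * W β s
      = ∑ s : Fin p → Bool, F (fun k => !(s k)) * W β s := by
  refine (Fintype.sum_bijective (fun s : Fin p → Bool => fun k => !(s k))
    (Function.Involutive.bijective (fun s => by funext k; simp))
    _ _ (fun s => ?_)).symm
  rw [W_not]

lemma mean_zero (k : Fin p) : ∑ s : Fin p → Bool, signVec s k * W β s = 0 := by
  have h := sum_flip β (fun s => signVec s k)
  have h2 : ∀ s : Fin p → Bool, signVec (fun k' => !(s k')) k = -(signVec s k) :=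
    fun s => congrFun (signVec_not s) k
  have h3 : ∑ s : Fin p → Bool, signVec (fun k' => !(s k')) k * W β s
      = -∑ s : Fin p → Bool, signVec s k * W β s := by
    rw [← Finset.sum_neg_distrib]
    exact Finset.sum_congr rfl fun s _ => by rw [h2]; ring
  rw [h3] at h
  linarith

/-- second moments (unnormalized) -/
def M2 (k l : Fin p) : ℝ := ∑ s : Fin p → Bool, signVec s k * signVec s l * W β s

lemma M2_symm (k l : Fin p) : M2 β k l = M2 β l k := by
  unfold M2; exact Finset.sum_congr rfl fun s _ => by ring



/-- the Hamiltonian -/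
def Hm (x : Fin p → ℝ) : ℝ := ∑ u : Fin p, ∑ v : Fin p, if u < v then β u v * x u * x v else 0

lemma W_eq (s : Fin p → Bool) : W β s = Real.exp (Hm β (signVec s)) := rfl

/-- merge of two configurations along a set -/
def mg (A : Set (Fin p)) (s t : Fin p → Bool) : Fin p → Bool := fun k => if k ∈ A then s k else t k

lemma sv_mg (A : Set (Fin p)) (s t : Fin p → Bool) (u : Fin p) :
    signVec (mg A s t) u = if u ∈ A then signVec s u else signVec t u := by
  by_cases h : u ∈ A <;> simp [signVec, mg, h]

lemma sv_congr {s t : Fin p → Bool} (u : Fin p) (h : s u = t u) : signVec s u = signVec t u := by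
  unfold signVec; rw [h]

lemma Hm_exchange (A R : Set (Fin p))
    (hcross : ∀ u v, u ∈ A → v ∉ A → v ∉ R → β u v = 0)
    (hcross' : ∀ u v, u ∉ A → u ∉ R → v ∈ A → β u v = 0)
    (s t : Fin p → Bool) (hst : ∀ ρ ∈ R, s ρ = t ρ) :
    Hm β (signVec (mg A s t)) + Hm β (signVec (mg A t s))
      = Hm β (signVec s) + Hm β (signVec t) := by
  unfold Hm
  rw [← Finset.sum_add_distrib, ← Finset.sum_add_distrib]
  refine Finset.sum_congr rfl fun u _ => ?_
  rw [← Finset.sum_add_distrib, ← Finset.sum_add_distrib]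
  refine Finset.sum_congr rfl fun v _ => ?_
  by_cases huv : u < v
  · simp only [if_pos huv, sv_mg]
    split_ifs with hu hv hv
    · ring
    · by_cases hvR : v ∈ R
      · rw [sv_congr v (hst v hvR)]; try ring
      · rw [hcross u v hu hv hvR]; ring
    · by_cases huR : u ∈ R
      · rw [sv_congr u (hst u huR)]; try ring
      · rw [hcross' u v hu huR hv]; ring
    · ring
  · simp [huv]

lemma W_exchange (A R : Set (Fin p))
    (hcross : ∀ u v, u ∈ A → v ∉ A → v ∉ R → β u v = 0)
    (hcross' : ∀ u v, u ∉ A → u ∉ R → v ∈ A → β u v = 0)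
    (s t : Fin p → Bool) (hst : ∀ ρ ∈ R, s ρ = t ρ) :
    W β (mg A s t) * W β (mg A t s) = W β s * W β t := by
  rw [W_eq, W_eq, W_eq, W_eq, ← Real.exp_add, ← Real.exp_add,
    Hm_exchange β A R hcross hcross' s t hst]

lemma mg_invol (A : Set (Fin p)) (s t : Fin p → Bool) :
    mg A (mg A s t) (mg A t s) = s ∧ mg A (mg A t s) (mg A s t) = t := by
  constructor <;> (funext k; by_cases h : k ∈ A <;> simp [mg, h])

set_option maxHeartbeats 1000000 in
lemma fact (A R : Set (Fin p))
    (hcross : ∀ u v, u ∈ A → v ∉ A → v ∉ R → β u v = 0)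
    (hcross' : ∀ u v, u ∉ A → u ∉ R → v ∈ A → β u v = 0)
    (f g : (Fin p → Bool) → ℝ)
    (hf : ∀ s t : Fin p → Bool, (∀ k ∈ A, s k = t k) → (∀ k ∈ R, s k = t k) → f s = f t)
    (hg : ∀ s t : Fin p → Bool, (∀ k, k ∉ A → s k = t k) → g s = g t) :
    (∑ s : Fin p → Bool, ∑ t : Fin p → Bool,
        if ∀ ρ ∈ R, s ρ = t ρ then f s * g t * (W β s * W β t) else 0)
      = ∑ s : Fin p → Bool, ∑ t : Fin p → Bool,
        if ∀ ρ ∈ R, s ρ = t ρ then f s * g s * (W β s * W β t) else 0 := by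
  have e1 : (∑ s : Fin p → Bool, ∑ t : Fin p → Bool,
      if ∀ ρ ∈ R, s ρ = t ρ then f s * g t * (W β s * W β t) else 0)
      = ∑ q : (Fin p → Bool) × (Fin p → Bool),
        (if ∀ ρ ∈ R, q.1 ρ = q.2 ρ then f q.1 * g q.2 * (W β q.1 * W β q.2) else 0) :=
    (Fintype.sum_prod_type (fun q : (Fin p → Bool) × (Fin p → Bool) =>
      if ∀ ρ ∈ R, q.1 ρ = q.2 ρ then f q.1 * g q.2 * (W β q.1 * W β q.2) else 0)).symm
  have e2 : (∑ s : Fin p → Bool, ∑ t : Fin p → Bool,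
      if ∀ ρ ∈ R, s ρ = t ρ then f s * g s * (W β s * W β t) else 0)
      = ∑ q : (Fin p → Bool) × (Fin p → Bool),
        (if ∀ ρ ∈ R, q.1 ρ = q.2 ρ then f q.1 * g q.1 * (W β q.1 * W β q.2) else 0) :=
    (Fintype.sum_prod_type (fun q : (Fin p → Bool) × (Fin p → Bool) =>
      if ∀ ρ ∈ R, q.1 ρ = q.2 ρ then f q.1 * g q.1 * (W β q.1 * W β q.2) else 0)).symm
  rw [e1, e2]
  refine (Fintype.sum_bijective
    (fun q : (Fin p → Bool) × (Fin p → Bool) => (mg A q.1 q.2, mg A q.2 q.1))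
    (Function.Involutive.bijective (fun q => by
      obtain ⟨s, t⟩ := q
      simp only [Prod.mk.injEq]
      exact ⟨(mg_invol A s t).1, (mg_invol A s t).2⟩)) _ _ ?_).symm
  rintro ⟨s, t⟩
  simp only
  have hcond : (∀ ρ ∈ R, mg A s t ρ = mg A t s ρ) ↔ (∀ ρ ∈ R, s ρ = t ρ) := by
    constructor
    · intro h ρ hρ
      have := h ρ hρ
      by_cases hA : ρ ∈ A <;> simp [mg, hA] at this <;> [exact this; exact this.symm]
    · intro h ρ hρ
      by_cases hA : ρ ∈ A <;> simp [mg, hA, h ρ hρ]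
  by_cases h : ∀ ρ ∈ R, s ρ = t ρ
  · rw [if_pos h, if_pos (hcond.2 h)]
    have hfs : f (mg A s t) = f s := by
      refine hf _ _ (fun k hk => by simp [mg, hk]) (fun k hk => ?_)
      by_cases hA : k ∈ A <;> simp [mg, hA, h k hk]
    have hgs : g (mg A t s) = g s := by
      refine hg _ _ (fun k hk => by simp [mg, hk])
    rw [hfs, hgs, W_exchange β A R hcross hcross' s t h]
  · rw [if_neg h, if_neg (fun hc => h (hcond.1 hc))]

/-- class partition function -/
def Ncl (R : Set (Fin p)) (t : Fin p → Bool) : ℝ :=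
  ∑ s : Fin p → Bool, if ∀ ρ ∈ R, s ρ = t ρ then W β s else 0

/-- class sum of `x^k` -/
def Gcl (R : Set (Fin p)) (k : Fin p) (t : Fin p → Bool) : ℝ :=
  ∑ s : Fin p → Bool, if ∀ ρ ∈ R, s ρ = t ρ then signVec s k * W β s else 0

lemma Ncl_pos (R : Set (Fin p)) (t : Fin p → Bool) : 0 < Ncl β R t := by
  refine Finset.sum_pos' (fun s _ => by split <;> [exact (W_pos β s).le; exact le_rfl])
    ⟨t, Finset.mem_univ t, ?_⟩
  rw [if_pos (fun ρ _ => rfl)]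
  exact W_pos β t

lemma Ncl_congr (R : Set (Fin p)) {t t' : Fin p → Bool} (h : ∀ ρ ∈ R, t ρ = t' ρ) :
    Ncl β R t = Ncl β R t' := by
  refine Finset.sum_congr rfl fun s _ => ?_
  refine if_congr ⟨fun hc ρ hρ => (hc ρ hρ).trans (h ρ hρ), fun hc ρ hρ => (hc ρ hρ).trans (h ρ hρ).symm⟩ rfl rfl

lemma Gcl_congr (R : Set (Fin p)) (k : Fin p) {t t' : Fin p → Bool} (h : ∀ ρ ∈ R, t ρ = t' ρ) :
    Gcl β R k t = Gcl β R k t' := by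
  refine Finset.sum_congr rfl fun s _ => ?_
  refine if_congr ⟨fun hc ρ hρ => (hc ρ hρ).trans (h ρ hρ), fun hc ρ hρ => (hc ρ hρ).trans (h ρ hρ).symm⟩ rfl rfl

lemma Ncl_flip (R : Set (Fin p)) (t : Fin p → Bool) :
    Ncl β R (fun k => !(t k)) = Ncl β R t := by
  refine (Fintype.sum_bijective (fun s : Fin p → Bool => fun k => !(s k))
    (Function.Involutive.bijective (fun s => by funext k; simp)) _ _ (fun s => ?_)).symm
  have hc : (∀ ρ ∈ R, (fun k => !(s k)) ρ = (fun k => !(t k)) ρ) ↔ (∀ ρ ∈ R, s ρ = t ρ) := by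
    constructor <;> intro h ρ hρ <;> have := h ρ hρ <;> simpa using this
  rw [if_congr hc.symm rfl rfl, W_not]

lemma Gcl_flip (R : Set (Fin p)) (k : Fin p) (t : Fin p → Bool) :
    Gcl β R k (fun k' => !(t k')) = -(Gcl β R k t) := by
  have h2 := Fintype.sum_bijective (fun s : Fin p → Bool => fun k' => !(s k'))
    (Function.Involutive.bijective (fun s => by funext k'; simp))
    (fun s => -(if ∀ ρ ∈ R, s ρ = t ρ then signVec s k * W β s else 0))
    (fun s => if ∀ ρ ∈ R, s ρ = (fun k' => !(t k')) ρ then signVec s k * W β s else 0)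
    (fun s => by
      simp only
      have hc : (∀ ρ ∈ R, (!(s ρ)) = (fun k' => !(t k')) ρ) ↔ (∀ ρ ∈ R, s ρ = t ρ) := by
        constructor <;> intro h ρ hρ <;> have := h ρ hρ <;> simpa using this
      by_cases h : ∀ ρ ∈ R, s ρ = t ρ
      · rw [if_pos h, if_pos (hc.mpr h)]
        have hsv : signVec (fun k' => !(s k')) k = -(signVec s k) := congrFun (signVec_not s) k
        rw [hsv, W_not]; ring
      · rw [if_neg h, if_neg (fun hcc => h (hc.mp hcc)), neg_zero])
  unfold Gcl
  rw [← h2, Finset.sum_neg_distrib]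



lemma exists_xi (R : Set (Fin p)) (hR2 : R.ncard ≤ 2) (k : Fin p) :
    ∃ ξ : Fin p → ℝ, (∀ ρ, ρ ∉ R → ξ ρ = 0) ∧
      ∀ t, Gcl β R k t = (∑ ρ : Fin p, ξ ρ * signVec t ρ) * Ncl β R t := by
  have hcase : R.ncard = 0 ∨ R.ncard = 1 ∨ R.ncard = 2 := by omega
  rcases hcase with h0 | h1 | h2
  · -- R = ∅
    have hRe : R = ∅ := (Set.ncard_eq_zero (Set.toFinite R)).1 h0
    subst hRe
    refine ⟨0, fun ρ _ => rfl, fun t => ?_⟩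
    have : Gcl β (∅ : Set (Fin p)) k t = ∑ s : Fin p → Bool, signVec s k * W β s := by
      unfold Gcl
      exact Finset.sum_congr rfl fun s _ => if_pos (fun ρ hρ => absurd hρ (Set.notMem_empty ρ))
    rw [this, mean_zero]
    simp
  · -- R = {a}
    obtain ⟨a, hRa⟩ := Set.ncard_eq_one.1 h1
    subst hRa
    set T : Fin p → Bool := fun _ => true with hT
    set c : ℝ := Gcl β {a} k T / Ncl β {a} T with hc
    refine ⟨fun ρ => if ρ = a then c else 0, fun ρ hρ => if_neg (fun he : ρ = a => hρ (by rw [he]; exact Set.mem_singleton a)), fun t => ?_⟩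
    have hsum : (∑ ρ : Fin p, (if ρ = a then c else 0) * signVec t ρ) = c * signVec t a := by
      rw [Finset.sum_congr rfl (fun ρ _ => by
        rw [show (if ρ = a then c else 0) * signVec t ρ
          = (if ρ = a then c * signVec t ρ else 0) from by split <;> simp])]
      simp [Finset.sum_ite_eq']
    rw [hsum]
    have hN := (Ncl_pos β {a} T).ne'
    cases ht : t a
    · -- t a = false : class of flip T
      have hcong : ∀ ρ ∈ ({a} : Set (Fin p)), t ρ = (fun k' => !(T k')) ρ := by
        intro ρ hρ; rw [Set.mem_singleton_iff] at hρ; subst hρ; simp [ht, hT]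
      rw [Gcl_congr β {a} k hcong, Ncl_congr β {a} hcong, Gcl_flip, Ncl_flip]
      have : signVec t a = -1 := by simp [signVec, ht]
      rw [this, hc]
      field_simp
    · -- t a = true : class of T
      have hcong : ∀ ρ ∈ ({a} : Set (Fin p)), t ρ = T ρ := by
        intro ρ hρ; rw [Set.mem_singleton_iff] at hρ; subst hρ; simp [ht, hT]
      rw [Gcl_congr β {a} k hcong, Ncl_congr β {a} hcong]
      have : signVec t a = 1 := by simp [signVec, ht]
      rw [this, hc]
      field_simp
  · -- R = {a, b}
    obtain ⟨a, b, hab, hRab⟩ := Set.ncard_eq_two.1 h2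
    subst hRab
    set T : Fin p → Bool := fun _ => true with hT
    set T' : Fin p → Bool := Function.update T b false with hT'
    have hT'a : T' a = true := by rw [hT', Function.update_of_ne hab]
    have hT'b : T' b = false := by rw [hT', Function.update_self]
    set g1 : ℝ := Gcl β {a, b} k T / Ncl β {a, b} T with hg1
    set g2 : ℝ := Gcl β {a, b} k T' / Ncl β {a, b} T' with hg2
    refine ⟨fun ρ => if ρ = a then (g1 + g2) / 2 else if ρ = b then (g1 - g2) / 2 else 0,
      fun ρ hρ => ?_, fun t => ?_⟩
    · simp only
      rw [if_neg (fun he : ρ = a => hρ (by rw [he]; exact Set.mem_insert a {b})),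
        if_neg (fun he : ρ = b => hρ (by rw [he]; exact Set.mem_insert_of_mem a rfl))]
    have hsum : (∑ ρ : Fin p, (if ρ = a then (g1 + g2) / 2 else if ρ = b then (g1 - g2) / 2 else 0)
        * signVec t ρ)
        = (g1 + g2) / 2 * signVec t a + (g1 - g2) / 2 * signVec t b := by
      rw [Finset.sum_congr rfl (fun ρ _ => by
        rw [show (if ρ = a then (g1 + g2) / 2 else if ρ = b then (g1 - g2) / 2 else 0) * signVec t ρ
          = (if ρ = a then (g1 + g2) / 2 * signVec t ρ else 0)
            + (if ρ = b then (g1 - g2) / 2 * signVec t ρ else 0) from by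
          rcases eq_or_ne ρ a with h | h
          · subst h; rw [if_pos rfl, if_pos rfl, if_neg hab]; ring
          · rw [if_neg h, if_neg h]
            split <;> ring])]
      rw [Finset.sum_add_distrib]
      simp [Finset.sum_ite_eq']
    rw [hsum]
    have hNT := (Ncl_pos β {a, b} T).ne'
    have hNT' := (Ncl_pos β {a, b} T').ne'
    have hmem : ∀ ρ ∈ ({a, b} : Set (Fin p)), ρ = a ∨ ρ = b := fun ρ hρ => hρ
    cases hta : t a <;> cases htb : t b
    · -- (false, false) : class of flip T
      have hcong : ∀ ρ ∈ ({a, b} : Set (Fin p)), t ρ = (fun k' => !(T k')) ρ := by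
        intro ρ hρ; rcases hmem ρ hρ with h | h <;> subst h <;> simp [hta, htb, hT]
      rw [Gcl_congr β {a, b} k hcong, Ncl_congr β {a, b} hcong, Gcl_flip, Ncl_flip]
      have h1 : signVec t a = -1 := by simp [signVec, hta]
      have h2 : signVec t b = -1 := by simp [signVec, htb]
      rw [h1, h2, hg1]
      field_simp
      ring
    · -- (false, true) : class of flip T'
      have hcong : ∀ ρ ∈ ({a, b} : Set (Fin p)), t ρ = (fun k' => !(T' k')) ρ := by
        intro ρ hρ; rcases hmem ρ hρ with h | h <;> subst h <;> simp [hta, htb, hT'a, hT'b]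
      rw [Gcl_congr β {a, b} k hcong, Ncl_congr β {a, b} hcong, Gcl_flip, Ncl_flip]
      have h1 : signVec t a = -1 := by simp [signVec, hta]
      have h2 : signVec t b = 1 := by simp [signVec, htb]
      rw [h1, h2, hg2]
      field_simp
      ring
    · -- (true, false) : class of T'
      have hcong : ∀ ρ ∈ ({a, b} : Set (Fin p)), t ρ = T' ρ := by
        intro ρ hρ; rcases hmem ρ hρ with h | h <;> subst h <;> simp [hta, htb, hT'a, hT'b]
      rw [Gcl_congr β {a, b} k hcong, Ncl_congr β {a, b} hcong]
      have h1 : signVec t a = 1 := by simp [signVec, hta]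
      have h2 : signVec t b = -1 := by simp [signVec, htb]
      rw [h1, h2, hg2]
      field_simp
      ring
    · -- (true, true) : class of T
      have hcong : ∀ ρ ∈ ({a, b} : Set (Fin p)), t ρ = T ρ := by
        intro ρ hρ; rcases hmem ρ hρ with h | h <;> subst h <;> simp [hta, htb, hT]
      rw [Gcl_congr β {a, b} k hcong, Ncl_congr β {a, b} hcong]
      have h1 : signVec t a = 1 := by simp [signVec, hta]
      have h2 : signVec t b = 1 := by simp [signVec, htb]
      rw [h1, h2, hg1]
      field_simp
      ring



set_option maxHeartbeats 1000000 in
lemma moment (A R : Set (Fin p))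
    (hcross : ∀ u v, u ∈ A → v ∉ A → v ∉ R → β u v = 0)
    (hcross' : ∀ u v, u ∉ A → u ∉ R → v ∈ A → β u v = 0)
    (hR2 : R.ncard ≤ 2) (k : Fin p) (hk : k ∈ A) :
    ∃ ξ : Fin p → ℝ, (∀ ρ, ρ ∉ R → ξ ρ = 0) ∧
      ∀ u, u ∉ A → M2 β k u = ∑ ρ : Fin p, ξ ρ * M2 β ρ u := by
  obtain ⟨ξ, hsupp, hlin⟩ := exists_xi β R hR2 k
  refine ⟨ξ, hsupp, fun u hu => ?_⟩
  set L : (Fin p → Bool) → ℝ := fun t => ∑ ρ : Fin p, ξ ρ * signVec t ρ with hLdef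
  have hL : ∀ s t : Fin p → Bool, (∀ ρ ∈ R, s ρ = t ρ) → L s = L t := by
    intro s t h
    refine Finset.sum_congr rfl fun ρ _ => ?_
    by_cases hρ : ρ ∈ R
    · rw [sv_congr ρ (h ρ hρ)]
    · rw [hsupp ρ hρ]; ring
  -- main claim
  have T0 : ∑ s : Fin p → Bool, (signVec s k - L s) * signVec s u * W β s = 0 := by
    set f : (Fin p → Bool) → ℝ := fun s => (signVec s k - L s) / Ncl β R s with hfdef
    set g : (Fin p → Bool) → ℝ := fun s => signVec s u with hgdef
    have hf : ∀ s t : Fin p → Bool, (∀ k' ∈ A, s k' = t k') → (∀ ρ ∈ R, s ρ = t ρ) → f s = f t := by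
      intro s t h1 h2
      simp only [hfdef]
      rw [sv_congr k (h1 k hk), hL s t h2, Ncl_congr β R h2]
    have hg : ∀ s t : Fin p → Bool, (∀ k', k' ∉ A → s k' = t k') → g s = g t := by
      intro s t h1
      simp only [hgdef]
      rw [sv_congr u (h1 u hu)]
    have key := fact β A R hcross hcross' f g hf hg
    -- Step 1 : rewrite target as weighted double sum
    have step1 : ∑ s : Fin p → Bool, (signVec s k - L s) * signVec s u * W β s
        = ∑ s : Fin p → Bool, f s * g s * W β s * Ncl β R s := by
      refine Finset.sum_congr rfl fun s _ => ?_
      have hN := (Ncl_pos β R s).ne'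
      simp only [hfdef, hgdef]
      field_simp
    have step2 : ∑ s : Fin p → Bool, f s * g s * W β s * Ncl β R s
        = ∑ s : Fin p → Bool, ∑ t : Fin p → Bool,
            if ∀ ρ ∈ R, s ρ = t ρ then f s * g s * (W β s * W β t) else 0 := by
      refine Finset.sum_congr rfl fun s _ => ?_
      have hswap : ∑ t : Fin p → Bool, (if ∀ ρ ∈ R, s ρ = t ρ then f s * g s * (W β s * W β t) else 0)
          = ∑ t : Fin p → Bool, (f s * g s * W β s) * (if ∀ ρ ∈ R, t ρ = s ρ then W β t else 0) := by
        refine Finset.sum_congr rfl fun t _ => ?_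
        have hcc : (∀ ρ ∈ R, s ρ = t ρ) ↔ (∀ ρ ∈ R, t ρ = s ρ) :=
          ⟨fun h ρ hρ => (h ρ hρ).symm, fun h ρ hρ => (h ρ hρ).symm⟩
        rw [if_congr hcc rfl rfl]
        split <;> ring
      rw [hswap, ← Finset.mul_sum]
      rfl
    have step4 : (∑ s : Fin p → Bool, ∑ t : Fin p → Bool,
            (if ∀ ρ ∈ R, s ρ = t ρ then f s * g t * (W β s * W β t) else 0))
        = ∑ t : Fin p → Bool, ∑ s : Fin p → Bool,
            (if ∀ ρ ∈ R, s ρ = t ρ then f s * g t * (W β s * W β t) else 0) :=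
      Finset.sum_comm
    have step5 : ∀ t : Fin p → Bool, (∑ s : Fin p → Bool,
        (if ∀ ρ ∈ R, s ρ = t ρ then f s * g t * (W β s * W β t) else 0)) = 0 := by
      intro t
      have hNt := (Ncl_pos β R t).ne'
      have inner : ∑ s : Fin p → Bool, (if ∀ ρ ∈ R, s ρ = t ρ then f s * W β s else 0)
          = (Gcl β R k t - L t * Ncl β R t) / Ncl β R t := by
        have hterm : ∀ s : Fin p → Bool, (if ∀ ρ ∈ R, s ρ = t ρ then f s * W β s else 0)
            = ((if ∀ ρ ∈ R, s ρ = t ρ then signVec s k * W β s else 0)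
              - L t * (if ∀ ρ ∈ R, s ρ = t ρ then W β s else 0)) / Ncl β R t := by
          intro s
          by_cases hc : ∀ ρ ∈ R, s ρ = t ρ
          · rw [if_pos hc, if_pos hc, if_pos hc]
            have e2 : Ncl β R s = Ncl β R t := Ncl_congr β R hc
            have : f s = (signVec s k - L t) / Ncl β R t := by
              simp only [hfdef]
              rw [hL s t hc, e2]
            rw [this]; ring
          · rw [if_neg hc, if_neg hc, if_neg hc]; ring
        rw [Finset.sum_congr rfl (fun s _ => hterm s), ← Finset.sum_div, Finset.sum_sub_distrib,
          ← Finset.mul_sum]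
        rfl
      have hzero : ∑ s : Fin p → Bool, (if ∀ ρ ∈ R, s ρ = t ρ then f s * W β s else 0) = 0 := by
        rw [inner, hlin t]
        simp only [hLdef]
        rw [sub_self, zero_div]
      calc ∑ s : Fin p → Bool, (if ∀ ρ ∈ R, s ρ = t ρ then f s * g t * (W β s * W β t) else 0)
          = ∑ s : Fin p → Bool, (g t * W β t) * (if ∀ ρ ∈ R, s ρ = t ρ then f s * W β s else 0) := by
            refine Finset.sum_congr rfl fun s _ => ?_
            split <;> ring
        _ = (g t * W β t) * ∑ s : Fin p → Bool, (if ∀ ρ ∈ R, s ρ = t ρ then f s * W β s else 0) :=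
            (Finset.mul_sum _ _ _).symm
        _ = 0 := by rw [hzero, mul_zero]
    rw [step1, step2, ← key, step4]
    exact Finset.sum_eq_zero fun t _ => step5 t
  -- conclude
  have e1 : ∑ ρ : Fin p, ξ ρ * M2 β ρ u = ∑ s : Fin p → Bool, L s * (signVec s u * W β s) := by
    calc ∑ ρ : Fin p, ξ ρ * M2 β ρ u
        = ∑ ρ : Fin p, ∑ s : Fin p → Bool, ξ ρ * (signVec s ρ * signVec s u * W β s) := by
          refine Finset.sum_congr rfl fun ρ _ => ?_
          rw [M2, Finset.mul_sum]
      _ = ∑ s : Fin p → Bool, ∑ ρ : Fin p, ξ ρ * (signVec s ρ * signVec s u * W β s) :=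
          Finset.sum_comm
      _ = ∑ s : Fin p → Bool, L s * (signVec s u * W β s) := by
          refine Finset.sum_congr rfl fun s _ => ?_
          simp only [hLdef]
          rw [Finset.sum_mul]
          exact Finset.sum_congr rfl fun ρ _ => by ring
  have e2 : M2 β k u - ∑ ρ : Fin p, ξ ρ * M2 β ρ u = 0 := by
    rw [e1, M2, ← Finset.sum_sub_distrib, ← T0]
    exact Finset.sum_congr rfl fun s _ => by ring
  linarith



section Meas

open MeasureTheory

variable {Ω : Type*} [MeasurableSpace Ω] (μ : Measure Ω) [IsProbabilityMeasure μ]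
  (X : Ω → Fin p → ℝ)

/-- the atom of a configuration -/
def atom (s : Fin p → Bool) : Set Ω := {ω | ∀ k, X ω k = signVec s k}

/-- boolean configuration of a sample point -/
def bcfg (ω : Ω) : Fin p → Bool := fun k => if X ω k = 1 then true else false

variable {X}

lemma atom_meas (hmeas : ∀ k, Measurable fun ω => X ω k) (s : Fin p → Bool) :
    MeasurableSet (atom X s) := by
  have : atom X s = ⋂ k, (fun ω => X ω k) ⁻¹' {signVec s k} := by
    ext ω; simp [atom, Set.mem_iInter]
  rw [this]
  exact MeasurableSet.iInter (fun k => (hmeas k) (measurableSet_singleton _))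

lemma mem_atom_bcfg (hpm : ∀ ω k, X ω k = 1 ∨ X ω k = -1) (ω : Ω) :
    ω ∈ atom X (bcfg X ω) := by
  intro k
  rcases hpm ω k with h | h
  · simp [signVec, bcfg, h]
  · have hne : ¬ X ω k = (1:ℝ) := by rw [h]; norm_num
    simp [signVec, bcfg, h, hne]

lemma eq_bcfg_of_mem {ω : Ω} {s : Fin p → Bool} (hmem : ω ∈ atom X s) : s = bcfg X ω := by
  funext k
  have h := hmem k
  cases hb : s k
  · have h1 : X ω k = -1 := by rw [h]; simp [signVec, hb]
    have hne : ¬ X ω k = (1:ℝ) := by rw [h1]; norm_num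
    simp [bcfg, hne]
  · have h1 : X ω k = 1 := by rw [h]; simp [signVec, hb]
    simp [bcfg, h1]

lemma meas_pred (hmeas : ∀ k, Measurable fun ω => X ω k)
    (hpm : ∀ ω k, X ω k = 1 ∨ X ω k = -1)
    (hpmf : ∀ s : Fin p → Bool, μ (atom X s) = ENNReal.ofReal (W β s / isingZ β))
    (Q : (Fin p → Bool) → Prop) :
    μ {ω | Q (bcfg X ω)}
      = ENNReal.ofReal (∑ s : Fin p → Bool, if Q s then W β s / isingZ β else 0) := by
  have hset : {ω | Q (bcfg X ω)} = ⋃ s ∈ Finset.univ.filter (fun s => Q s), atom X s := by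
    ext ω
    simp only [Set.mem_setOf_eq, Set.mem_iUnion, Finset.mem_filter, Finset.mem_univ, true_and]
    constructor
    · intro h; exact ⟨bcfg X ω, h, mem_atom_bcfg hpm ω⟩
    · rintro ⟨s, hQ, hmem⟩; rwa [eq_bcfg_of_mem hmem] at hQ
  have hdisj : ((Finset.univ.filter (fun s : Fin p → Bool => Q s) : Finset (Fin p → Bool)) :
      Set (Fin p → Bool)).PairwiseDisjoint (atom X) := by
    intro s _ t _ hst
    refine Set.disjoint_left.2 fun ω hs ht => hst ?_
    rw [eq_bcfg_of_mem hs, eq_bcfg_of_mem ht]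
  rw [hset, measure_biUnion_finset hdisj (fun s _ => atom_meas hmeas s),
    Finset.sum_congr rfl (fun s _ => hpmf s),
    ← ENNReal.ofReal_sum_of_nonneg (fun s _ => div_nonneg (W_pos β s).le (Z_pos β).le),
    Finset.sum_filter]

lemma integral_comp (hmeas : ∀ k, Measurable fun ω => X ω k)
    (hpm : ∀ ω k, X ω k = 1 ∨ X ω k = -1)
    (hpmf : ∀ s : Fin p → Bool, μ (atom X s) = ENNReal.ofReal (W β s / isingZ β))
    (Φ : (Fin p → ℝ) → ℝ) :
    expec μ (fun ω => Φ (X ω)) = (∑ s : Fin p → Bool, Φ (signVec s) * W β s) / isingZ β := by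
  have hfun : (fun ω => Φ (X ω))
      = fun ω => ∑ s : Fin p → Bool, (atom X s).indicator (fun _ => Φ (signVec s)) ω := by
    funext ω
    rw [Finset.sum_eq_single (bcfg X ω)]
    · rw [Set.indicator_of_mem (mem_atom_bcfg hpm ω)]
      congr 1
      funext k
      exact mem_atom_bcfg hpm ω k
    · intro s _ hs
      exact Set.indicator_of_notMem (fun hmem => hs (eq_bcfg_of_mem hmem)) _
    · intro h; exact absurd (Finset.mem_univ _) h
  rw [expec, hfun, MeasureTheory.integral_finset_sum _
    (fun s _ => (MeasureTheory.integrable_const _).indicator (atom_meas hmeas s))]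
  have hval : ∀ s : Fin p → Bool,
      ∫ ω, (atom X s).indicator (fun _ => Φ (signVec s)) ω ∂μ
        = W β s / isingZ β * Φ (signVec s) := by
    intro s
    rw [MeasureTheory.integral_indicator_const _ (atom_meas hmeas s), measureReal_def, hpmf s,
      ENNReal.toReal_ofReal (div_nonneg (W_pos β s).le (Z_pos β).le), smul_eq_mul]
  rw [Finset.sum_congr rfl (fun s _ => hval s), Finset.sum_div]
  exact Finset.sum_congr rfl fun s _ => by ring

lemma coord_mem (hmeas : ∀ k, Measurable fun ω => X ω k)
    (hpm : ∀ ω k, X ω k = 1 ∨ X ω k = -1)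
    (hpmf : ∀ s : Fin p → Bool, μ (atom X s) = ENNReal.ofReal (W β s / isingZ β))
    (A : Set (Fin p)) (l : Fin p) (hl : l ∈ A) :
    (fun ω => X ω l) ∈ addSpace μ X A := by
  have hmem : (fun ω : Ω => X ω l) ∈ {f : Ω → ℝ | ∃ k ∈ A, ∃ φ : ℝ → ℝ,
      expec μ (fun ω => φ (X ω k)) = 0 ∧ f = fun ω => φ (X ω k)} := by
    refine ⟨l, hl, fun x => x, ?_, rfl⟩
    have h := integral_comp β μ hmeas hpm hpmf (fun x => x l)
    rw [mean_zero, zero_div] at h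
    exact h
  exact Submodule.subset_span hmem

set_option maxHeartbeats 1000000 in
lemma repr_addSpace (hmeas : ∀ k, Measurable fun ω => X ω k)
    (hpm : ∀ ω k, X ω k = 1 ∨ X ω k = -1)
    (hpmf : ∀ s : Fin p → Bool, μ (atom X s) = ENNReal.ofReal (W β s / isingZ β))
    (A : Set (Fin p)) (f : Ω → ℝ) (hf : f ∈ addSpace μ X A) :
    ∃ c : Fin p → ℝ, (∀ k, k ∉ A → c k = 0) ∧ ∀ ω, f ω = ∑ k : Fin p, c k * X ω k := by
  unfold addSpace at hf
  refine Submodule.span_induction (p := fun (g : Ω → ℝ) _ => ∃ c : Fin p → ℝ,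
    (∀ k, k ∉ A → c k = 0) ∧ ∀ ω, g ω = ∑ k : Fin p, c k * X ω k) ?_ ?_ ?_ ?_ hf
  · rintro g ⟨k, hk, φ, hφ0, rfl⟩
    -- symmetry: φ (-1) = -(φ 1)
    have hWp : (∑ s : Fin p → Bool, if s k then W β s else 0)
        = ∑ s : Fin p → Bool, if s k then 0 else W β s := by
      have h := sum_flip β (fun s => if s k then 1 else 0)
      calc (∑ s : Fin p → Bool, if s k then W β s else 0)
          = ∑ s : Fin p → Bool, (if s k then (1:ℝ) else 0) * W β s :=
            Finset.sum_congr rfl fun s _ => by split <;> simp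
        _ = ∑ s : Fin p → Bool, (if (!(s k)) then (1:ℝ) else 0) * W β s := h
        _ = ∑ s : Fin p → Bool, if s k then 0 else W β s :=
            Finset.sum_congr rfl fun s _ => by cases hs : s k <;> simp [hs]
    have hWp_pos : 0 < ∑ s : Fin p → Bool, if s k then W β s else 0 := by
      refine Finset.sum_pos' (fun s _ => by split <;> [exact (W_pos β s).le; exact le_rfl])
        ⟨fun _ => true, Finset.mem_univ _, by rw [if_pos rfl]; exact W_pos β (fun _ => true)⟩
    have hsplit : ∑ s : Fin p → Bool, φ (signVec s k) * W β s
        = (φ 1 + φ (-1)) * ∑ s : Fin p → Bool, if s k then W β s else 0 := by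
      calc ∑ s : Fin p → Bool, φ (signVec s k) * W β s
          = ∑ s : Fin p → Bool, ((if s k then φ 1 * W β s else 0) + (if s k then 0 else φ (-1) * W β s)) :=
            Finset.sum_congr rfl fun s _ => by
              cases hs : s k <;> simp [signVec, hs]
        _ = φ 1 * (∑ s : Fin p → Bool, if s k then W β s else 0)
            + φ (-1) * (∑ s : Fin p → Bool, if s k then 0 else W β s) := by
            rw [Finset.sum_add_distrib, Finset.mul_sum, Finset.mul_sum]
            congr 1 <;> exact Finset.sum_congr rfl fun s _ => by split <;> simp
        _ = (φ 1 + φ (-1)) * ∑ s : Fin p → Bool, if s k then W β s else 0 := by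
            rw [← hWp]; ring
    have hint : expec μ (fun ω => φ (X ω k))
        = (∑ s : Fin p → Bool, φ (signVec s k) * W β s) / isingZ β :=
      integral_comp β μ hmeas hpm hpmf (fun x => φ (x k))
    rw [hφ0, hsplit] at hint
    have hsum0 : (φ 1 + φ (-1)) * (∑ s : Fin p → Bool, if s k then W β s else 0) = 0 := by
      rw [eq_comm, div_eq_iff (Z_pos β).ne', zero_mul] at hint
      exact hint
    have hneg : φ (-1) = -(φ 1) := by
      rcases mul_eq_zero.1 hsum0 with h | h
      · linarith
      · exact absurd h hWp_pos.ne'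
    refine ⟨fun k' => if k' = k then φ 1 else 0,
      fun k' hk' => if_neg (fun he : k' = k => hk' (by rw [he]; exact hk)), fun ω => ?_⟩
    have : ∑ k' : Fin p, (if k' = k then φ 1 else 0) * X ω k' = φ 1 * X ω k := by
      rw [Finset.sum_congr rfl (fun k' _ => show (if k' = k then φ 1 else 0) * X ω k'
        = if k' = k then φ 1 * X ω k' else 0 from by split <;> simp)]
      simp [Finset.sum_ite_eq']
    rw [this]
    show φ (X ω k) = φ 1 * X ω k
    rcases hpm ω k with h | h <;> rw [h]
    · rw [mul_one]
    · rw [hneg]; ring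
  · exact ⟨0, fun k _ => rfl, fun ω => by simp⟩
  · rintro g h _ _ ⟨c, hc, hg⟩ ⟨d, hd, hh⟩
    refine ⟨fun k => c k + d k, fun k hk => by show c k + d k = 0; rw [hc k hk, hd k hk, add_zero], fun ω => ?_⟩
    rw [show (g + h) ω = g ω + h ω from rfl, hg ω, hh ω, ← Finset.sum_add_distrib]
    exact Finset.sum_congr rfl fun k _ => by ring
  · rintro a g _ ⟨c, hc, hg⟩
    refine ⟨fun k => a * c k, fun k hk => by show a * c k = 0; rw [hc k hk, mul_zero], fun ω => ?_⟩
    rw [show (a • g) ω = a * g ω from rfl, hg ω, Finset.mul_sum]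
    exact Finset.sum_congr rfl fun k _ => by ring

lemma ite_irrel (P : Prop) (h1 h2 : Decidable P) (x y : ℝ) :
    @ite _ P h1 x y = @ite _ P h2 x y := by rw [Subsingleton.elim h1 h2]

lemma ite_or_add {P Q : Prop} (v : ℝ) (h : ¬(P ∧ Q)) :
    (if P ∨ Q then v else 0) = (if P then v else 0) + (if Q then v else 0) := by
  by_cases hP : P <;> by_cases hQ : Q
  · exact absurd ⟨hP, hQ⟩ h
  · rw [if_pos (Or.inl hP), if_pos hP, if_neg hQ, add_zero]
  · rw [if_pos (Or.inr hQ), if_neg hP, if_pos hQ, zero_add]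
  · rw [if_neg (by tauto), if_neg hP, if_neg hQ, add_zero]

lemma double_delta (C : ℝ) (i0 j0 : Fin p) :
    (∑ u : Fin p, ∑ v : Fin p, if u = i0 ∧ v = j0 then C else 0) = C := by
  have hin : ∀ u : Fin p, (∑ v : Fin p, if u = i0 ∧ v = j0 then C else 0)
      = if u = i0 then C else 0 := by
    intro u
    by_cases hu : u = i0
    · rw [if_pos hu]
      rw [Finset.sum_congr rfl (fun v _ => if_congr (and_iff_right hu) rfl rfl)]
      simp [Finset.sum_ite_eq']
    · rw [if_neg hu]
      exact Finset.sum_eq_zero fun v _ => if_neg (fun hc => hu hc.1)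
  rw [Finset.sum_congr rfl (fun u _ => hin u)]
  simp [Finset.sum_ite_eq']

section CI

variable {i j : Fin p}

/-- configuration with values `a, b` at `i, j` and `true` elsewhere -/
def scfg (i j : Fin p) (a b : Bool) : Fin p → Bool :=
  fun k => if k = i then a else if k = j then b else true

lemma scfg_i (a b : Bool) : scfg i j a b i = a := by simp [scfg]

lemma scfg_j (hij : i ≠ j) (a b : Bool) : scfg i j a b j = b := by
  simp [scfg, (Ne.symm hij)]

lemma scfg_o (a b : Bool) (k : Fin p) (h1 : k ≠ i) (h2 : k ≠ j) : scfg i j a b k = true := by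
  simp [scfg, h1, h2]

lemma scfg_inj (hij : i ≠ j) {a b a' b' : Bool} (h : scfg i j a b = scfg i j a' b') :
    a = a' ∧ b = b' := by
  constructor
  · have := congrFun h i; rwa [scfg_i, scfg_i] at this
  · have := congrFun h j; rwa [scfg_j hij, scfg_j hij] at this

lemma eq_scfg_iff (hij : i ≠ j) (s : Fin p → Bool) (a b : Bool) :
    (s i = a ∧ s j = b ∧ ∀ k, k ≠ i → k ≠ j → s k = true) ↔ s = scfg i j a b := by
  constructor
  · rintro ⟨h1, h2, h3⟩
    funext k
    by_cases hk1 : k = i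
    · subst hk1; rw [scfg_i, h1]
    · by_cases hk2 : k = j
      · subst hk2; rw [scfg_j hij, h2]
      · rw [scfg_o a b k hk1 hk2, h3 k hk1 hk2]
  · rintro rfl
    exact ⟨scfg_i a b, scfg_j hij a b, fun k h1 h2 => scfg_o a b k h1 h2⟩

lemma X_eq_iff {Ω : Type*} {X : Ω → Fin p → ℝ} (hpm : ∀ ω k, X ω k = 1 ∨ X ω k = -1)
    (ω : Ω) (k : Fin p) (a : Bool) :
    X ω k = (if a then (1:ℝ) else -1) ↔ bcfg X ω k = a := by
  rcases hpm ω k with h | h <;> cases a <;> simp [bcfg, h] <;> norm_num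

lemma sv_scfg (hij : i ≠ j) (a b : Bool) (k : Fin p) :
    signVec (scfg i j a b) k = if k = i then (if a then (1:ℝ) else -1)
      else if k = j then (if b then 1 else -1) else 1 := by
  unfold signVec scfg
  by_cases h1 : k = i
  · simp [h1]
  · by_cases h2 : k = j <;> simp [h1, h2, Ne.symm hij]

set_option maxHeartbeats 2000000 in
lemma beta_zero_of_CI {Ω : Type*} [MeasurableSpace Ω] (μ : Measure Ω)
    [IsProbabilityMeasure μ] {X : Ω → Fin p → ℝ}
    (hmeas : ∀ k, Measurable fun ω => X ω k)
    (hpm : ∀ ω k, X ω k = 1 ∨ X ω k = -1)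
    (hpmf : ∀ s : Fin p → Bool, μ (atom X s) = ENNReal.ofReal (W β s / isingZ β))
    (hsym : β.IsSymm) (hij : i ≠ j) (hCI : CIpair μ X i j) : β i j = 0 := by
  set u : Bool → Bool → ℝ := fun a b => W β (scfg i j a b) with hu
  have hupos : ∀ a b, 0 < u a b := fun a b => W_pos β _
  set S4 : ℝ := u true true + u true false + u false true + u false false with hS4
  have hS4pos : 0 < S4 := by
    have := hupos true true; have := hupos true false
    have := hupos false true; have := hupos false false
    rw [hS4]; linarith
  have hZ := Z_pos β
  have hne4 : ∀ (a1 b1 a2 b2 : Bool), (a1 ≠ a2 ∨ b1 ≠ b2) →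
      scfg i j a1 b1 ≠ scfg i j a2 b2 := by
    intro a1 b1 a2 b2 hne h
    obtain ⟨h1, h2⟩ := scfg_inj hij h
    rcases hne with hn | hn
    · exact hn h1
    · exact hn h2
  have hmain : ∀ a b : Bool,
      u a b * S4 = (u a true + u a false) * (u true b + u false b) := by
    intro a b
    have hCIab := hCI (if a then (1:ℝ) else -1) (if b then (1:ℝ) else -1) (fun _ => (1:ℝ))
    have hfullset : {ω | X ω i = (if a then (1:ℝ) else -1) ∧ X ω j = (if b then (1:ℝ) else -1)
        ∧ ∀ k, k ≠ i → k ≠ j → X ω k = (fun _ => (1:ℝ)) k}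
        = {ω | (fun s => s i = a ∧ s j = b ∧ ∀ k, k ≠ i → k ≠ j → s k = true) (bcfg X ω)} := by
      ext ω
      simp only [Set.mem_setOf_eq]
      rw [X_eq_iff hpm ω i a, X_eq_iff hpm ω j b]
      refine and_congr Iff.rfl (and_congr Iff.rfl ?_)
      refine forall_congr' fun k => imp_congr Iff.rfl (imp_congr Iff.rfl ?_)
      exact X_eq_iff hpm ω k true
    have hzset : {ω | ∀ k, k ≠ i → k ≠ j → X ω k = (fun _ => (1:ℝ)) k}
        = {ω | (fun s => ∀ k, k ≠ i → k ≠ j → s k = true) (bcfg X ω)} := by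
      ext ω
      simp only [Set.mem_setOf_eq]
      refine forall_congr' fun k => imp_congr Iff.rfl (imp_congr Iff.rfl ?_)
      exact X_eq_iff hpm ω k true
    have hrowset : {ω | X ω i = (if a then (1:ℝ) else -1)
        ∧ ∀ k, k ≠ i → k ≠ j → X ω k = (fun _ => (1:ℝ)) k}
        = {ω | (fun s => s i = a ∧ ∀ k, k ≠ i → k ≠ j → s k = true) (bcfg X ω)} := by
      ext ω
      simp only [Set.mem_setOf_eq]
      rw [X_eq_iff hpm ω i a]
      refine and_congr Iff.rfl ?_
      refine forall_congr' fun k => imp_congr Iff.rfl (imp_congr Iff.rfl ?_)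
      exact X_eq_iff hpm ω k true
    have hcolset : {ω | X ω j = (if b then (1:ℝ) else -1)
        ∧ ∀ k, k ≠ i → k ≠ j → X ω k = (fun _ => (1:ℝ)) k}
        = {ω | (fun s => s j = b ∧ ∀ k, k ≠ i → k ≠ j → s k = true) (bcfg X ω)} := by
      ext ω
      simp only [Set.mem_setOf_eq]
      rw [X_eq_iff hpm ω j b]
      refine and_congr Iff.rfl ?_
      refine forall_congr' fun k => imp_congr Iff.rfl (imp_congr Iff.rfl ?_)
      exact X_eq_iff hpm ω k true
    rw [hfullset, hzset, hrowset, hcolset] at hCIab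
    have hfullsum : (∑ s : Fin p → Bool,
        if s i = a ∧ s j = b ∧ ∀ k, k ≠ i → k ≠ j → s k = true then W β s / isingZ β else 0)
        = u a b / isingZ β := by
      rw [Finset.sum_congr rfl (fun s _ =>
        if_congr (eq_scfg_iff hij s a b) rfl rfl)]
      rw [Finset.sum_ite_eq' Finset.univ (scfg i j a b) (fun s => W β s / isingZ β),
        if_pos (Finset.mem_univ _)]
    have hrowiff : ∀ (s : Fin p → Bool),
        (s i = a ∧ ∀ k, k ≠ i → k ≠ j → s k = true)
          ↔ (s = scfg i j a true ∨ s = scfg i j a false) := by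
      intro s
      constructor
      · rintro ⟨h1, h3⟩
        cases hsj : s j
        · exact Or.inr ((eq_scfg_iff hij s a false).1 ⟨h1, hsj, h3⟩)
        · exact Or.inl ((eq_scfg_iff hij s a true).1 ⟨h1, hsj, h3⟩)
      · rintro (rfl | rfl)
        · exact ⟨scfg_i a true, fun k h1 h2 => scfg_o a true k h1 h2⟩
        · exact ⟨scfg_i a false, fun k h1 h2 => scfg_o a false k h1 h2⟩
    have hcoliff : ∀ (s : Fin p → Bool),
        (s j = b ∧ ∀ k, k ≠ i → k ≠ j → s k = true)
          ↔ (s = scfg i j true b ∨ s = scfg i j false b) := by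
      intro s
      constructor
      · rintro ⟨h1, h3⟩
        cases hsi : s i
        · exact Or.inr ((eq_scfg_iff hij s false b).1 ⟨hsi, h1, h3⟩)
        · exact Or.inl ((eq_scfg_iff hij s true b).1 ⟨hsi, h1, h3⟩)
      · rintro (rfl | rfl)
        · exact ⟨scfg_j hij true b, fun k h1 h2 => scfg_o true b k h1 h2⟩
        · exact ⟨scfg_j hij false b, fun k h1 h2 => scfg_o false b k h1 h2⟩
    have hterm_row : ∀ s : Fin p → Bool,
        (if s i = a ∧ ∀ k, k ≠ i → k ≠ j → s k = true then W β s / isingZ β else 0)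
        = (if s = scfg i j a true then W β s / isingZ β else 0)
          + (if s = scfg i j a false then W β s / isingZ β else 0) := by
      intro s
      by_cases h1 : s = scfg i j a true <;> by_cases h2 : s = scfg i j a false
      · exact absurd (h1.symm.trans h2) (hne4 a true a false (Or.inr (by simp)))
      · rw [if_pos ((hrowiff s).2 (Or.inl h1)), if_pos h1, if_neg h2, add_zero]
      · rw [if_pos ((hrowiff s).2 (Or.inr h2)), if_neg h1, if_pos h2, zero_add]
      · rw [if_neg (fun hc => ((hrowiff s).1 hc).elim h1 h2), if_neg h1, if_neg h2, add_zero]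
    have hrowsum : (∑ s : Fin p → Bool,
        if s i = a ∧ ∀ k, k ≠ i → k ≠ j → s k = true then W β s / isingZ β else 0)
        = (u a true + u a false) / isingZ β := by
      rw [Finset.sum_congr rfl (fun s _ => hterm_row s)]
      rw [Finset.sum_add_distrib,
        Finset.sum_ite_eq' Finset.univ (scfg i j a true) (fun s => W β s / isingZ β),
        Finset.sum_ite_eq' Finset.univ (scfg i j a false) (fun s => W β s / isingZ β),
        if_pos (Finset.mem_univ _), if_pos (Finset.mem_univ _), add_div]
    have hterm_col : ∀ s : Fin p → Bool,
        (if s j = b ∧ ∀ k, k ≠ i → k ≠ j → s k = true then W β s / isingZ β else 0)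
        = (if s = scfg i j true b then W β s / isingZ β else 0)
          + (if s = scfg i j false b then W β s / isingZ β else 0) := by
      intro s
      by_cases h1 : s = scfg i j true b <;> by_cases h2 : s = scfg i j false b
      · exact absurd (h1.symm.trans h2) (hne4 true b false b (Or.inl (by simp)))
      · rw [if_pos ((hcoliff s).2 (Or.inl h1)), if_pos h1, if_neg h2, add_zero]
      · rw [if_pos ((hcoliff s).2 (Or.inr h2)), if_neg h1, if_pos h2, zero_add]
      · rw [if_neg (fun hc => ((hcoliff s).1 hc).elim h1 h2), if_neg h1, if_neg h2, add_zero]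
    have hcolsum : (∑ s : Fin p → Bool,
        if s j = b ∧ ∀ k, k ≠ i → k ≠ j → s k = true then W β s / isingZ β else 0)
        = (u true b + u false b) / isingZ β := by
      rw [Finset.sum_congr rfl (fun s _ => hterm_col s)]
      rw [Finset.sum_add_distrib,
        Finset.sum_ite_eq' Finset.univ (scfg i j true b) (fun s => W β s / isingZ β),
        Finset.sum_ite_eq' Finset.univ (scfg i j false b) (fun s => W β s / isingZ β),
        if_pos (Finset.mem_univ _), if_pos (Finset.mem_univ _), add_div]
    have hziff : ∀ (s : Fin p → Bool), (∀ k, k ≠ i → k ≠ j → s k = true)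
        ↔ ((s = scfg i j true true ∨ s = scfg i j true false)
          ∨ (s = scfg i j false true ∨ s = scfg i j false false)) := by
      intro s
      constructor
      · intro h3
        cases hsi : s i
        · cases hsj : s j
          · exact Or.inr (Or.inr ((eq_scfg_iff hij s false false).1 ⟨hsi, hsj, h3⟩))
          · exact Or.inr (Or.inl ((eq_scfg_iff hij s false true).1 ⟨hsi, hsj, h3⟩))
        · cases hsj : s j
          · exact Or.inl (Or.inr ((eq_scfg_iff hij s true false).1 ⟨hsi, hsj, h3⟩))
          · exact Or.inl (Or.inl ((eq_scfg_iff hij s true true).1 ⟨hsi, hsj, h3⟩))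
      · rintro ((rfl | rfl) | (rfl | rfl)) <;> exact fun k h1 h2 => scfg_o _ _ k h1 h2
    have hterm_z : ∀ s : Fin p → Bool,
        (if ∀ k, k ≠ i → k ≠ j → s k = true then W β s / isingZ β else 0)
        = ((if s = scfg i j true true then W β s / isingZ β else 0)
          + (if s = scfg i j true false then W β s / isingZ β else 0))
          + ((if s = scfg i j false true then W β s / isingZ β else 0)
          + (if s = scfg i j false false then W β s / isingZ β else 0)) := by
      intro s
      by_cases h11 : s = scfg i j true true
      · rw [if_pos ((hziff s).2 (Or.inl (Or.inl h11))), if_pos h11,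
          if_neg (fun h => hne4 true true true false (Or.inr (by simp)) (h11.symm.trans h)),
          if_neg (fun h => hne4 true true false true (Or.inl (by simp)) (h11.symm.trans h)),
          if_neg (fun h => hne4 true true false false (Or.inl (by simp)) (h11.symm.trans h))]
        ring
      · by_cases h10 : s = scfg i j true false
        · rw [if_pos ((hziff s).2 (Or.inl (Or.inr h10))), if_neg h11, if_pos h10,
            if_neg (fun h => hne4 true false false true (Or.inl (by simp)) (h10.symm.trans h)),
            if_neg (fun h => hne4 true false false false (Or.inl (by simp)) (h10.symm.trans h))]
          ring
        · by_cases h01 : s = scfg i j false true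
          · rw [if_pos ((hziff s).2 (Or.inr (Or.inl h01))), if_neg h11, if_neg h10, if_pos h01,
              if_neg (fun h => hne4 false true false false (Or.inr (by simp)) (h01.symm.trans h))]
            ring
          · by_cases h00 : s = scfg i j false false
            · rw [if_pos ((hziff s).2 (Or.inr (Or.inr h00))), if_neg h11, if_neg h10,
                if_neg h01, if_pos h00]
              ring
            · rw [if_neg (fun hc => by
                rcases (hziff s).1 hc with (h | h) | (h | h)
                exacts [h11 h, h10 h, h01 h, h00 h]),
                if_neg h11, if_neg h10, if_neg h01, if_neg h00]
              ring
    have hzsum : (∑ s : Fin p → Bool,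
        if ∀ k, k ≠ i → k ≠ j → s k = true then W β s / isingZ β else 0)
        = S4 / isingZ β := by
      rw [Finset.sum_congr rfl (fun s _ => hterm_z s)]
      rw [Finset.sum_add_distrib, Finset.sum_add_distrib, Finset.sum_add_distrib,
        Finset.sum_ite_eq' Finset.univ (scfg i j true true) (fun s => W β s / isingZ β),
        Finset.sum_ite_eq' Finset.univ (scfg i j true false) (fun s => W β s / isingZ β),
        Finset.sum_ite_eq' Finset.univ (scfg i j false true) (fun s => W β s / isingZ β),
        Finset.sum_ite_eq' Finset.univ (scfg i j false false) (fun s => W β s / isingZ β),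
        if_pos (Finset.mem_univ _), if_pos (Finset.mem_univ _),
        if_pos (Finset.mem_univ _), if_pos (Finset.mem_univ _), hS4]
      ring
    have m1 : μ {ω | (fun s => s i = a ∧ s j = b ∧ ∀ k, k ≠ i → k ≠ j → s k = true) (bcfg X ω)}
        = ENNReal.ofReal (u a b / isingZ β) := by
      rw [meas_pred β μ hmeas hpm hpmf (fun s => s i = a ∧ s j = b ∧ ∀ k, k ≠ i → k ≠ j → s k = true)]
      congr 1
      rw [← hfullsum]
      exact Finset.sum_congr rfl fun s _ => ite_irrel _ _ _ _ _
    have m2 : μ {ω | (fun s => ∀ k, k ≠ i → k ≠ j → s k = true) (bcfg X ω)}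
        = ENNReal.ofReal (S4 / isingZ β) := by
      rw [meas_pred β μ hmeas hpm hpmf (fun s => ∀ k, k ≠ i → k ≠ j → s k = true)]
      congr 1
      rw [← hzsum]
      exact Finset.sum_congr rfl fun s _ => ite_irrel _ _ _ _ _
    have m3 : μ {ω | (fun s => s i = a ∧ ∀ k, k ≠ i → k ≠ j → s k = true) (bcfg X ω)}
        = ENNReal.ofReal ((u a true + u a false) / isingZ β) := by
      rw [meas_pred β μ hmeas hpm hpmf (fun s => s i = a ∧ ∀ k, k ≠ i → k ≠ j → s k = true)]
      congr 1
      rw [← hrowsum]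
      exact Finset.sum_congr rfl fun s _ => ite_irrel _ _ _ _ _
    have m4 : μ {ω | (fun s => s j = b ∧ ∀ k, k ≠ i → k ≠ j → s k = true) (bcfg X ω)}
        = ENNReal.ofReal ((u true b + u false b) / isingZ β) := by
      rw [meas_pred β μ hmeas hpm hpmf (fun s => s j = b ∧ ∀ k, k ≠ i → k ≠ j → s k = true)]
      congr 1
      rw [← hcolsum]
      exact Finset.sum_congr rfl fun s _ => ite_irrel _ _ _ _ _
    rw [m1, m2, m3, m4] at hCIab
    have hn1 : (0:ℝ) ≤ u a b / isingZ β := div_nonneg (hupos a b).le hZ.le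
    have hn2 : (0:ℝ) ≤ S4 / isingZ β := div_nonneg hS4pos.le hZ.le
    have hn3 : (0:ℝ) ≤ (u a true + u a false) / isingZ β :=
      div_nonneg (add_nonneg (hupos a true).le (hupos a false).le) hZ.le
    have hn4 : (0:ℝ) ≤ (u true b + u false b) / isingZ β :=
      div_nonneg (add_nonneg (hupos true b).le (hupos false b).le) hZ.le
    rw [← ENNReal.ofReal_mul hn1, ← ENNReal.ofReal_mul hn3] at hCIab
    have hreal := (ENNReal.ofReal_eq_ofReal_iff (mul_nonneg hn1 hn2) (mul_nonneg hn3 hn4)).1 hCIab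
    have hZne := hZ.ne'
    calc u a b * S4 = (u a b / isingZ β * (S4 / isingZ β)) * (isingZ β * isingZ β) := by
          field_simp
      _ = ((u a true + u a false) / isingZ β * ((u true b + u false b) / isingZ β))
            * (isingZ β * isingZ β) := by rw [hreal]
      _ = (u a true + u a false) * (u true b + u false b) := by field_simp
  -- combine the four equations
  have hprod : u true true * u false false = u true false * u false true := by
    have e11 := hmain true true
    have e00 := hmain false false
    have e10 := hmain true false
    have e01 := hmain false true
    have h2 : (u true true * u false false) * (S4 * S4)
        = (u true false * u false true) * (S4 * S4) := by
      calc (u true true * u false false) * (S4 * S4)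
          = (u true true * S4) * (u false false * S4) := by ring
        _ = ((u true true + u true false) * (u true true + u false true))
            * ((u false true + u false false) * (u true false + u false false)) := by
            rw [e11, e00]
        _ = ((u true true + u true false) * (u true false + u false false))
            * ((u false true + u false false) * (u true true + u false true)) := by ring
        _ = (u true false * S4) * (u false true * S4) := by rw [← e10, ← e01]
        _ = (u true false * u false true) * (S4 * S4) := by ring
    exact mul_right_cancel₀ (mul_pos hS4pos hS4pos).ne' h2
  -- pass to Hamiltonians
  have hexp : Real.exp (Hm β (signVec (scfg i j true true)) + Hm β (signVec (scfg i j false false)))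
      = Real.exp (Hm β (signVec (scfg i j true false)) + Hm β (signVec (scfg i j false true))) := by
    rw [Real.exp_add, Real.exp_add]
    exact hprod
  have hHeq := Real.exp_eq_exp.1 hexp
  -- pointwise combination
  have hpt : ∀ k l : Fin p,
      ((if k < l then β k l * signVec (scfg i j true true) k * signVec (scfg i j true true) l else 0)
      + (if k < l then β k l * signVec (scfg i j false false) k * signVec (scfg i j false false) l else 0))
      - (if k < l then β k l * signVec (scfg i j true false) k * signVec (scfg i j true false) l else 0)
      - (if k < l then β k l * signVec (scfg i j false true) k * signVec (scfg i j false true) l else 0)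
      = (if k = i ∧ l = j then (if i < j then 4 * β i j else 0) else 0)
        + (if k = j ∧ l = i then (if j < i then 4 * β j i else 0) else 0) := by
    intro k l
    by_cases hkl : k < l
    · simp only [if_pos hkl, sv_scfg hij]
      by_cases hki : k = i
      · subst hki
        have hlk : l ≠ k := ne_of_gt hkl
        by_cases hlj : l = j
        · subst hlj
          simp [hij, Ne.symm hij, hkl, hlk]
          ring
        · simp [hij, hlj, hlk]
      · by_cases hkj : k = j
        · subst hkj
          have hlk : l ≠ k := ne_of_gt hkl
          by_cases hli : l = i
          · subst hli
            simp [hij, Ne.symm hij, hkl, hlk, asymm hkl]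
            ring
          · simp [Ne.symm hij, hli, hlk, hki]
        · by_cases hli : l = i
          · subst hli
            simp [hki, hkj]
            try ring
          · by_cases hlj : l = j
            · subst hlj
              simp [hki, hkj, hli]
              try ring
            · simp [hki, hkj, hli, hlj]
    · simp only [if_neg hkl]
      by_cases h1 : k = i ∧ l = j
      · have hnij : ¬ i < j := by rw [← h1.1, ← h1.2]; exact hkl
        rw [if_pos h1, if_neg hnij,
          if_neg (fun hc : k = j ∧ l = i => hij (h1.1.symm.trans hc.1))]
        ring
      · by_cases h2 : k = j ∧ l = i
        · have hnji : ¬ j < i := by rw [← h2.1, ← h2.2]; exact hkl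
          rw [if_neg h1, if_pos h2, if_neg hnji]
          ring
        · rw [if_neg h1, if_neg h2]
          ring
  have hcomb : Hm β (signVec (scfg i j true true)) + Hm β (signVec (scfg i j false false))
      - Hm β (signVec (scfg i j true false)) - Hm β (signVec (scfg i j false true))
      = (if i < j then 4 * β i j else 0) + (if j < i then 4 * β j i else 0) := by
    unfold Hm
    rw [← Finset.sum_add_distrib, ← Finset.sum_sub_distrib, ← Finset.sum_sub_distrib]
    have : ∀ u : Fin p,
        ((∑ v : Fin p, if u < v then β u v * signVec (scfg i j true true) u * signVec (scfg i j true true) v else 0)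
        + (∑ v : Fin p, if u < v then β u v * signVec (scfg i j false false) u * signVec (scfg i j false false) v else 0))
        - (∑ v : Fin p, if u < v then β u v * signVec (scfg i j true false) u * signVec (scfg i j true false) v else 0)
        - (∑ v : Fin p, if u < v then β u v * signVec (scfg i j false true) u * signVec (scfg i j false true) v else 0)
        = ∑ v : Fin p, ((if u = i ∧ v = j then (if i < j then 4 * β i j else 0) else 0)
          + (if u = j ∧ v = i then (if j < i then 4 * β j i else 0) else 0)) := by
      intro u
      rw [← Finset.sum_add_distrib, ← Finset.sum_sub_distrib, ← Finset.sum_sub_distrib]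
      exact Finset.sum_congr rfl fun v _ => hpt u v
    rw [Finset.sum_congr rfl (fun u _ => this u),
      Finset.sum_congr rfl (fun u _ => Finset.sum_add_distrib),
      Finset.sum_add_distrib, double_delta, double_delta]
  have hlhs0 : Hm β (signVec (scfg i j true true)) + Hm β (signVec (scfg i j false false))
      - Hm β (signVec (scfg i j true false)) - Hm β (signVec (scfg i j false true)) = 0 := by
    linarith [hHeq]
  have hzero : (if i < j then 4 * β i j else 0) + (if j < i then 4 * β j i else 0) = 0 := by
    rw [← hcomb]; exact hlhs0
  rcases Ne.lt_or_gt hij with h | h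
  · rw [if_pos h, if_neg (asymm h), add_zero] at hzero
    linarith
  · rw [if_neg (asymm h), if_pos h, zero_add] at hzero
    have hji : β j i = 0 := by linarith
    rw [← Matrix.IsSymm.apply hsym i j]
    exact hji

end CI

end Meas

/-- evaluation vector -/
def evec (u : Fin p) : Fin p → ℝ := fun l => if l = u then 1 else 0

/-- the unnormalized second-moment bilinear form -/
def Bq (v u : Fin p → ℝ) : ℝ :=
  ∑ s : Fin p → Bool, (∑ k : Fin p, v k * signVec s k) * (∑ k : Fin p, u k * signVec s k) * W β s

lemma Bq_symm (v u : Fin p → ℝ) : Bq β v u = Bq β u v :=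
  Finset.sum_congr rfl fun s _ => by ring

lemma Bq_ev' (v : Fin p → ℝ) (l : Fin p) :
    (∑ s : Fin p → Bool, (∑ k : Fin p, v k * signVec s k) * signVec s l * W β s)
      = ∑ k : Fin p, v k * M2 β k l := by
  have h2 : ∀ s : Fin p → Bool, (∑ k : Fin p, v k * signVec s k) * signVec s l * W β s
      = ∑ k : Fin p, v k * (signVec s k * signVec s l * W β s) := by
    intro s
    rw [Finset.sum_mul, Finset.sum_mul]
    exact Finset.sum_congr rfl fun k _ => by ring
  rw [Finset.sum_congr rfl (fun s _ => h2 s), Finset.sum_comm]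
  exact Finset.sum_congr rfl fun k _ => by rw [M2, Finset.mul_sum]

lemma Bq_ev (v : Fin p → ℝ) (u : Fin p) : Bq β v (evec u) = ∑ k : Fin p, v k * M2 β k u := by
  have h1 : ∀ s : Fin p → Bool, (∑ k : Fin p, evec u k * signVec s k) = signVec s u := by
    intro s
    rw [Finset.sum_congr rfl (fun k _ => show evec u k * signVec s k
      = if k = u then signVec s k else 0 from by unfold evec; split <;> simp)]
    simp [Finset.sum_ite_eq']
  unfold Bq
  rw [Finset.sum_congr rfl (fun s _ => by rw [h1 s])]
  exact Bq_ev' β v u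

lemma Bq_expand2 (v u : Fin p → ℝ) : Bq β v u = ∑ l : Fin p, u l * Bq β v (evec l) := by
  have h2 : ∀ s : Fin p → Bool,
      (∑ k : Fin p, v k * signVec s k) * (∑ k : Fin p, u k * signVec s k) * W β s
      = ∑ l : Fin p, u l * ((∑ k : Fin p, v k * signVec s k) * signVec s l * W β s) := by
    intro s
    rw [Finset.mul_sum, Finset.sum_mul]
    exact Finset.sum_congr rfl fun l _ => by ring
  have hL : Bq β v u = ∑ l : Fin p, u l *
      (∑ s : Fin p → Bool, (∑ k : Fin p, v k * signVec s k) * signVec s l * W β s) := by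
    unfold Bq
    rw [Finset.sum_congr rfl (fun s _ => h2 s), Finset.sum_comm]
    exact Finset.sum_congr rfl fun l _ => by rw [Finset.mul_sum]
  rw [hL]
  exact Finset.sum_congr rfl fun l _ => by rw [Bq_ev β v l, Bq_ev' β v l]

lemma Bq_sub1 (v w u : Fin p → ℝ) : Bq β (fun x => v x - w x) u = Bq β v u - Bq β w u := by
  unfold Bq
  rw [← Finset.sum_sub_distrib]
  refine Finset.sum_congr rfl fun s _ => ?_
  rw [show (∑ k : Fin p, (v k - w k) * signVec s k)
    = (∑ k : Fin p, v k * signVec s k) - (∑ k : Fin p, w k * signVec s k) from by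
      rw [← Finset.sum_sub_distrib]; exact Finset.sum_congr rfl fun k _ => by ring]
  ring

lemma Bq_null (m : Fin p → ℝ) (h : Bq β m m = 0) (x : Fin p → ℝ) : Bq β m x = 0 := by
  have hz : ∀ s : Fin p → Bool, (∑ k : Fin p, m k * signVec s k) = 0 := by
    intro s
    have hnn : ∀ s ∈ (Finset.univ : Finset (Fin p → Bool)),
        0 ≤ (∑ k : Fin p, m k * signVec s k) * (∑ k : Fin p, m k * signVec s k) * W β s :=
      fun s _ => mul_nonneg (mul_self_nonneg _) (W_pos β s).le
    have := (Finset.sum_eq_zero_iff_of_nonneg hnn).1 h s (Finset.mem_univ s)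
    rcases mul_eq_zero.1 this with h1 | h1
    · exact mul_self_eq_zero.1 h1
    · exact absurd h1 (W_pos β s).ne'
  unfold Bq
  refine Finset.sum_eq_zero fun s _ => ?_
  rw [hz s, zero_mul, zero_mul]

set_option maxHeartbeats 1000000 in
lemma final_alg (Si Sj Rset : Set (Fin p)) (i j : Fin p)
    (hiSi : i ∈ Si) (hjSj : j ∈ Sj)
    (hdisj : ∀ l, l ∈ Si → l ∉ Sj)
    (hSiR : ∀ l, l ∈ Si → l ∉ Rset) (hSjR : ∀ l, l ∈ Sj → l ∉ Rset)
    (hiR : i ∉ Rset) (hjR : j ∉ Rset)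
    (ξi ξj : Fin p → Fin p → ℝ)
    (hξi : ∀ k, k ∈ Si → ((∀ ρ, ρ ∉ Rset → ξi k ρ = 0)
      ∧ ∀ u, u ∉ Si → M2 β k u = ∑ ρ : Fin p, ξi k ρ * M2 β ρ u))
    (hξj : ∀ k, k ∈ Sj → ((∀ ρ, ρ ∉ Rset → ξj k ρ = 0)
      ∧ ∀ u, u ∉ Sj → M2 β k u = ∑ ρ : Fin p, ξj k ρ * M2 β ρ u))
    (c d : Fin p → ℝ) (hcj : c j = 0) (hdi : d i = 0)
    (hcorth : ∀ l, l ≠ i → l ≠ j → (∑ k : Fin p, c k * M2 β k l) = 0)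
    (hdorth : ∀ l, l ≠ i → l ≠ j → (∑ k : Fin p, d k * M2 β k l) = 0) :
    Bq β c d = 0 := by
  set cA : Fin p → ℝ :=
    fun v => ∑ k : Fin p, if k ∈ Si then c k * ((if v = k then 1 else 0) - ξi k v) else 0 with hcA
  set dA : Fin p → ℝ :=
    fun v => ∑ k : Fin p, if k ∈ Sj then d k * ((if v = k then 1 else 0) - ξj k v) else 0 with hdA
  set m : Fin p → ℝ := fun v => c v - cA v with hm
  set n : Fin p → ℝ := fun v => d v - dA v with hn
  -- Bq of cA against coordinates off Si vanishes
  have GA : ∀ u, u ∉ Si → Bq β cA (evec u) = 0 := by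
    intro u hu
    rw [Bq_ev]
    have hswap : ∑ w : Fin p, cA w * M2 β w u
        = ∑ k : Fin p, ∑ w : Fin p,
          (if k ∈ Si then c k * ((if w = k then 1 else 0) - ξi k w) else 0) * M2 β w u := by
      rw [Finset.sum_comm]
      refine Finset.sum_congr rfl fun w _ => ?_
      simp only [hcA]
      rw [Finset.sum_mul]
    rw [hswap]
    refine Finset.sum_eq_zero fun k _ => ?_
    by_cases hk : k ∈ Si
    · have hk2 := (hξi k hk).2 u hu
      have : ∀ w : Fin p, (if k ∈ Si then c k * ((if w = k then 1 else 0) - ξi k w) else 0) * M2 β w u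
          = c k * ((if w = k then M2 β w u else 0) - ξi k w * M2 β w u) := by
        intro w
        rw [if_pos hk]
        split <;> ring
      rw [Finset.sum_congr rfl (fun w _ => this w), ← Finset.mul_sum, Finset.sum_sub_distrib]
      rw [Finset.sum_ite_eq' Finset.univ k (fun w => M2 β w u), if_pos (Finset.mem_univ _)]
      rw [← hk2]
      simp
    · refine Finset.sum_eq_zero fun w _ => ?_
      rw [if_neg hk, zero_mul]
  have GA' : ∀ u, u ∉ Sj → Bq β dA (evec u) = 0 := by
    intro u hu
    rw [Bq_ev]
    have hswap : ∑ w : Fin p, dA w * M2 β w u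
        = ∑ k : Fin p, ∑ w : Fin p,
          (if k ∈ Sj then d k * ((if w = k then 1 else 0) - ξj k w) else 0) * M2 β w u := by
      rw [Finset.sum_comm]
      refine Finset.sum_congr rfl fun w _ => ?_
      simp only [hdA]
      rw [Finset.sum_mul]
    rw [hswap]
    refine Finset.sum_eq_zero fun k _ => ?_
    by_cases hk : k ∈ Sj
    · have hk2 := (hξj k hk).2 u hu
      have : ∀ w : Fin p, (if k ∈ Sj then d k * ((if w = k then 1 else 0) - ξj k w) else 0) * M2 β w u
          = d k * ((if w = k then M2 β w u else 0) - ξj k w * M2 β w u) := by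
        intro w
        rw [if_pos hk]
        split <;> ring
      rw [Finset.sum_congr rfl (fun w _ => this w), ← Finset.mul_sum, Finset.sum_sub_distrib]
      rw [Finset.sum_ite_eq' Finset.univ k (fun w => M2 β w u), if_pos (Finset.mem_univ _)]
      rw [← hk2]
      simp
    · refine Finset.sum_eq_zero fun w _ => ?_
      rw [if_neg hk, zero_mul]
  -- support of m
  have hmsupp : ∀ v, (v ∈ Si ∨ v = j) → m v = 0 := by
    intro v hv
    rcases hv with hv | hveq
    · have : cA v = c v := by
        simp only [hcA]
        have hterm : ∀ k : Fin p,
            (if k ∈ Si then c k * ((if v = k then 1 else 0) - ξi k v) else 0)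
            = if k = v then c v else 0 := by
          intro k
          by_cases hk : k ∈ Si
          · rw [if_pos hk, (hξi k hk).1 v (hSiR v hv), sub_zero]
            by_cases hkv : k = v
            · subst hkv; rw [if_pos rfl, if_pos rfl, mul_one]
            · rw [if_neg (fun h : v = k => hkv h.symm), if_neg hkv, mul_zero]
          · rw [if_neg hk, if_neg (fun h : k = v => hk (h ▸ hv))]
        rw [Finset.sum_congr rfl (fun k _ => hterm k)]
        rw [Finset.sum_ite_eq' Finset.univ v (fun _ => c v), if_pos (Finset.mem_univ _)]
      simp only [hm]
      rw [this, sub_self]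
    · rw [hveq]
      have : cA j = 0 := by
        simp only [hcA]
        refine Finset.sum_eq_zero fun k _ => ?_
        by_cases hk : k ∈ Si
        · rw [if_pos hk, (hξi k hk).1 j hjR,
            if_neg (fun h : j = k => (h ▸ hk : j ∈ Si) |> (fun hj => hdisj j hj hjSj))]
          ring
        · rw [if_neg hk]
      simp only [hm]
      rw [this, hcj, sub_zero]
  have hnsupp : ∀ v, (v ∈ Sj ∨ v = i) → n v = 0 := by
    intro v hv
    rcases hv with hv | hveq
    · have : dA v = d v := by
        simp only [hdA]
        have hterm : ∀ k : Fin p,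
            (if k ∈ Sj then d k * ((if v = k then 1 else 0) - ξj k v) else 0)
            = if k = v then d v else 0 := by
          intro k
          by_cases hk : k ∈ Sj
          · rw [if_pos hk, (hξj k hk).1 v (hSjR v hv), sub_zero]
            by_cases hkv : k = v
            · subst hkv; rw [if_pos rfl, if_pos rfl, mul_one]
            · rw [if_neg (fun h : v = k => hkv h.symm), if_neg hkv, mul_zero]
          · rw [if_neg hk, if_neg (fun h : k = v => hk (h ▸ hv))]
        rw [Finset.sum_congr rfl (fun k _ => hterm k)]
        rw [Finset.sum_ite_eq' Finset.univ v (fun _ => d v), if_pos (Finset.mem_univ _)]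
      simp only [hn]
      rw [this, sub_self]
    · rw [hveq]
      have : dA i = 0 := by
        simp only [hdA]
        refine Finset.sum_eq_zero fun k _ => ?_
        by_cases hk : k ∈ Sj
        · rw [if_pos hk, (hξj k hk).1 i hiR,
            if_neg (fun h : i = k => hdisj i hiSi (h ▸ hk))]
          ring
        · rw [if_neg hk]
      simp only [hn]
      rw [this, hdi, sub_zero]
  -- m orthogonal to coordinates
  have Gm : ∀ u, u ∉ Si → u ≠ j → Bq β m (evec u) = 0 := by
    intro u hu huj
    have hui : u ≠ i := fun h => hu (h ▸ hiSi)
    have hmeq : m = fun v => c v - cA v := hm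
    rw [hmeq, Bq_sub1]
    have h1 : Bq β c (evec u) = 0 := by
      rw [Bq_ev]
      exact hcorth u hui huj
    rw [h1, GA u hu, sub_zero]
  have Gn : ∀ u, u ∉ Sj → u ≠ i → Bq β n (evec u) = 0 := by
    intro u hu hui
    have huj : u ≠ j := fun h => hu (h ▸ hjSj)
    have hneq : n = fun v => d v - dA v := hn
    rw [hneq, Bq_sub1]
    have h1 : Bq β d (evec u) = 0 := by
      rw [Bq_ev]
      exact hdorth u hui huj
    rw [h1, GA' u hu, sub_zero]
  -- m is null
  have hmnull : ∀ x, Bq β m x = 0 := by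
    have h0 : Bq β m m = 0 := by
      rw [Bq_expand2]
      refine Finset.sum_eq_zero fun v _ => ?_
      by_cases hv : v ∈ Si ∨ v = j
      · rw [hmsupp v hv, zero_mul]
      · push_neg at hv
        rw [Gm v hv.1 hv.2, mul_zero]
    exact Bq_null β m h0
  have hnnull : ∀ x, Bq β n x = 0 := by
    have h0 : Bq β n n = 0 := by
      rw [Bq_expand2]
      refine Finset.sum_eq_zero fun v _ => ?_
      by_cases hv : v ∈ Sj ∨ v = i
      · rw [hnsupp v hv, zero_mul]
      · push_neg at hv
        rw [Gn v hv.1 hv.2, mul_zero]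
    exact Bq_null β n h0
  -- cross term
  have hdAsupp : ∀ l, l ∉ Sj → l ∉ Rset → dA l = 0 := by
    intro l h1 h2
    simp only [hdA]
    refine Finset.sum_eq_zero fun k _ => ?_
    by_cases hk : k ∈ Sj
    · rw [if_pos hk, (hξj k hk).1 l h2, if_neg (fun h : l = k => h1 (h ▸ hk)), sub_zero, mul_zero]
    · rw [if_neg hk]
  have hcross : Bq β cA dA = 0 := by
    rw [Bq_expand2]
    refine Finset.sum_eq_zero fun l _ => ?_
    by_cases hl : l ∈ Si
    · rw [hdAsupp l (hdisj l hl) (hSiR l hl), zero_mul]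
    · rw [GA l hl, mul_zero]
  -- assemble
  have hc' : Bq β c d = Bq β m d + Bq β cA d := by
    have := Bq_sub1 β c cA d
    rw [← hm] at this
    linarith [this]
  have hd1 : Bq β cA d = Bq β d cA := Bq_symm β cA d
  have hd2 : Bq β d cA = Bq β n cA + Bq β dA cA := by
    have := Bq_sub1 β d dA cA
    rw [← hn] at this
    linarith [this]
  rw [hc', hmnull d, hd1, hd2, hnnull cA, Bq_symm β dA cA, hcross]
  ring

end Stmt5Aux

/-- under a symmetric Ising model, if there is an `(i,j)`-separator of
cardinality at most 2, then conditional independence of `X^i` and `X^j` given the rest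
implies additive conditional independence. -/
theorem stmt5 {Ω : Type*} [MeasurableSpace Ω] (μ : MeasureTheory.Measure Ω)
    [MeasureTheory.IsProbabilityMeasure μ]
    (p : ℕ) (hp : 3 ≤ p) (X : Ω → Fin p → ℝ) (hmeas : ∀ k, Measurable fun ω => X ω k)
    (β : Matrix (Fin p) (Fin p) ℝ) (hIsing : IsSymIsing μ X β)
    (i j : Fin p) (hij : i ≠ j) (R : Set (Fin p))
    (hsep : IsSeparator (isingEdges β) i j R) (hR : R.ncard ≤ 2) :
    CIpair μ X i j → ACI μ X {i} {j} ({i, j}ᶜ : Set (Fin p)) := by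
  intro hCI
  classical
  obtain ⟨hsym, hdiag, hpm, hpmf'⟩ := hIsing
  have hpmf : ∀ s : Fin p → Bool,
      μ (Stmt5Aux.atom X s) = ENNReal.ofReal (Stmt5Aux.W β s / isingZ β) := hpmf'
  have hβij : β i j = 0 := Stmt5Aux.beta_zero_of_CI β μ hmeas hpm hpmf hsym hij hCI
  have hβji : β j i = 0 := (Matrix.IsSymm.apply hsym i j).trans hβij
  set adj : Fin p → Fin p → Prop := reducedAdj (isingEdges β) i j R with hadjdef
  have hadjsymm : Symmetric adj := by
    rintro k l ⟨⟨hkl, hβ⟩, h1, h2, h3⟩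
    exact ⟨⟨hkl.symm, fun h0 => hβ (by rw [Matrix.IsSymm.apply hsym l k]; exact h0)⟩,
      fun hc => h2 ⟨hc.2, hc.1⟩, fun hc => h1 ⟨hc.2, hc.1⟩, h3.symm⟩
  have hRTGsymm : Symmetric (Relation.ReflTransGen adj) :=
    by haveI : Std.Symm adj := ⟨fun a b h => hadjsymm h⟩; exact fun a b h => Std.Symm.symm (r := Relation.ReflTransGen adj) a b h
  have hreach_notR : ∀ a : Fin p, a ∉ R → ∀ l, Relation.ReflTransGen adj a l → l ∉ R := by
    intro a ha l h
    induction h with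
    | refl => exact ha
    | tail _ hadj ih => exact fun hR => ih (hadj.2.2.2.mpr hR)
  set Si : Set (Fin p) := {l | Relation.ReflTransGen adj i l} with hSidef
  set Sj : Set (Fin p) := {l | Relation.ReflTransGen adj j l} with hSjdef
  have hiSi : i ∈ Si := Relation.ReflTransGen.refl
  have hjSj : j ∈ Sj := Relation.ReflTransGen.refl
  have hdisj : ∀ l, l ∈ Si → l ∉ Sj := fun l h1 h2 =>
    hsep.2.2 (Relation.ReflTransGen.trans h1 (hRTGsymm h2))
  have hSiR : ∀ l, l ∈ Si → l ∉ R := fun l hl => hreach_notR i hsep.1 l hl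
  have hSjR : ∀ l, l ∈ Sj → l ∉ R := fun l hl => hreach_notR j hsep.2.1 l hl
  have hcross_gen : ∀ a : Fin p, a ∉ R → ∀ u v : Fin p,
      Relation.ReflTransGen adj a u → ¬ Relation.ReflTransGen adj a v → v ∉ R →
      β u v = 0 := by
    intro a ha u v hu hv hvR
    by_contra hβuv
    have hne : u ≠ v := fun he => hv (he ▸ hu)
    have huR : u ∉ R := hreach_notR a ha u hu
    have hadjuv : adj u v :=
      ⟨⟨hne, hβuv⟩, fun hc => hβuv (by rw [hc.1, hc.2]; exact hβij),
        fun hc => hβuv (by rw [hc.1, hc.2]; exact hβji), iff_of_false huR hvR⟩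
    exact hv (Relation.ReflTransGen.tail hu hadjuv)
  have hcrossSi : ∀ u v : Fin p, u ∈ Si → v ∉ Si → v ∉ R → β u v = 0 :=
    fun u v hu hv hvR => hcross_gen i hsep.1 u v hu hv hvR
  have hcrossSi' : ∀ u v : Fin p, u ∉ Si → u ∉ R → v ∈ Si → β u v = 0 :=
    fun u v hu huR hv => (Matrix.IsSymm.apply hsym u v).symm.trans (hcrossSi v u hv hu huR)
  have hcrossSj : ∀ u v : Fin p, u ∈ Sj → v ∉ Sj → v ∉ R → β u v = 0 :=
    fun u v hu hv hvR => hcross_gen j hsep.2.1 u v hu hv hvR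
  have hcrossSj' : ∀ u v : Fin p, u ∉ Sj → u ∉ R → v ∈ Sj → β u v = 0 :=
    fun u v hu huR hv => (Matrix.IsSymm.apply hsym u v).symm.trans (hcrossSj v u hv hu huR)
  have hmomSi : ∀ k : Fin p, ∃ ξk : Fin p → ℝ, k ∈ Si →
      ((∀ ρ, ρ ∉ R → ξk ρ = 0) ∧
        ∀ u, u ∉ Si → Stmt5Aux.M2 β k u = ∑ ρ : Fin p, ξk ρ * Stmt5Aux.M2 β ρ u) := by
    intro k
    by_cases hk : k ∈ Si
    · obtain ⟨ξ, h1, h2⟩ := Stmt5Aux.moment β Si R hcrossSi hcrossSi' hR k hk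
      exact ⟨ξ, fun _ => ⟨h1, h2⟩⟩
    · exact ⟨0, fun h => absurd h hk⟩
  have hmomSj : ∀ k : Fin p, ∃ ξk : Fin p → ℝ, k ∈ Sj →
      ((∀ ρ, ρ ∉ R → ξk ρ = 0) ∧
        ∀ u, u ∉ Sj → Stmt5Aux.M2 β k u = ∑ ρ : Fin p, ξk ρ * Stmt5Aux.M2 β ρ u) := by
    intro k
    by_cases hk : k ∈ Sj
    · obtain ⟨ξ, h1, h2⟩ := Stmt5Aux.moment β Sj R hcrossSj hcrossSj' hR k hk
      exact ⟨ξ, fun _ => ⟨h1, h2⟩⟩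
    · exact ⟨0, fun h => absurd h hk⟩
  choose ξi hξi using hmomSi
  choose ξj hξj using hmomSj
  -- the additive conditional independence statement
  intro f hf hfo g hg hgo
  obtain ⟨c, hcsupp, hcrep⟩ :=
    Stmt5Aux.repr_addSpace β μ hmeas hpm hpmf ({i} ∪ ({i, j}ᶜ : Set (Fin p))) f hf
  obtain ⟨d, hdsupp, hdrep⟩ :=
    Stmt5Aux.repr_addSpace β μ hmeas hpm hpmf ({j} ∪ ({i, j}ᶜ : Set (Fin p))) g hg
  have hcj : c j = 0 := by
    refine hcsupp j ?_
    intro h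
    rcases h with h | h
    · exact hij (Set.mem_singleton_iff.1 h).symm
    · exact h (Or.inr rfl)
  have hdi : d i = 0 := by
    refine hdsupp i ?_
    intro h
    rcases h with h | h
    · exact hij (Set.mem_singleton_iff.1 h)
    · exact h (Or.inl rfl)
  have hforth : ∀ l : Fin p, l ≠ i → l ≠ j → (∑ k : Fin p, c k * Stmt5Aux.M2 β k l) = 0 := by
    intro l hli hlj
    have hlmem : l ∈ ({i, j}ᶜ : Set (Fin p)) := by
      simp only [Set.mem_compl_iff, Set.mem_insert_iff, Set.mem_singleton_iff]
      push_neg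
      exact ⟨hli, hlj⟩
    have h0 := hfo _ (Stmt5Aux.coord_mem β μ hmeas hpm hpmf ({i, j}ᶜ) l hlmem)
    have h0' : expec μ (fun ω =>
        (fun x : Fin p → ℝ => (∑ k : Fin p, c k * x k) * x l) (X ω)) = 0 := by
      rw [show (fun ω => (fun x : Fin p → ℝ => (∑ k : Fin p, c k * x k) * x l) (X ω))
          = fun ω => f ω * X ω l from funext fun ω => by simp only; rw [hcrep ω]]
      exact h0
    rw [Stmt5Aux.integral_comp β μ hmeas hpm hpmf
      (fun x : Fin p → ℝ => (∑ k : Fin p, c k * x k) * x l), div_eq_zero_iff] at h0'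
    rcases h0' with h0' | h0'
    · rw [← Stmt5Aux.Bq_ev' β c l]
      exact h0'
    · exact absurd h0' (Stmt5Aux.Z_pos β).ne'
  have hgorth : ∀ l : Fin p, l ≠ i → l ≠ j → (∑ k : Fin p, d k * Stmt5Aux.M2 β k l) = 0 := by
    intro l hli hlj
    have hlmem : l ∈ ({i, j}ᶜ : Set (Fin p)) := by
      simp only [Set.mem_compl_iff, Set.mem_insert_iff, Set.mem_singleton_iff]
      push_neg
      exact ⟨hli, hlj⟩
    have h0 := hgo _ (Stmt5Aux.coord_mem β μ hmeas hpm hpmf ({i, j}ᶜ) l hlmem)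
    have h0' : expec μ (fun ω =>
        (fun x : Fin p → ℝ => (∑ k : Fin p, d k * x k) * x l) (X ω)) = 0 := by
      rw [show (fun ω => (fun x : Fin p → ℝ => (∑ k : Fin p, d k * x k) * x l) (X ω))
          = fun ω => g ω * X ω l from funext fun ω => by simp only; rw [hdrep ω]]
      exact h0
    rw [Stmt5Aux.integral_comp β μ hmeas hpm hpmf
      (fun x : Fin p → ℝ => (∑ k : Fin p, d k * x k) * x l), div_eq_zero_iff] at h0'
    rcases h0' with h0' | h0'
    · rw [← Stmt5Aux.Bq_ev' β d l]
      exact h0'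
    · exact absurd h0' (Stmt5Aux.Z_pos β).ne'
  have hfinal : Stmt5Aux.Bq β c d = 0 :=
    Stmt5Aux.final_alg β Si Sj R i j hiSi hjSj hdisj hSiR hSjR hsep.1 hsep.2.1
      ξi ξj hξi hξj c d hcj hdi hforth hgorth
  have heq2 : (fun ω => f ω * g ω) = fun ω =>
      (fun x : Fin p → ℝ => (∑ k : Fin p, c k * x k) * (∑ k : Fin p, d k * x k)) (X ω) :=
    funext fun ω => by simp only; rw [hcrep ω, hdrep ω]
  rw [heq2, Stmt5Aux.integral_comp β μ hmeas hpm hpmf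
    (fun x : Fin p → ℝ => (∑ k : Fin p, c k * x k) * (∑ k : Fin p, d k * x k))]
  have hsum : (∑ s : Fin p → Bool,
      (fun x : Fin p → ℝ => (∑ k : Fin p, c k * x k) * (∑ k : Fin p, d k * x k)) (signVec s)
        * Stmt5Aux.W β s) = Stmt5Aux.Bq β c d := rfl
  rw [hsum, hfinal, zero_div]
end
end
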